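/- arXiv:2503.16102 — 7 statements merged into one kernel-verified Lean document; each statement's English description precedes it below -/
import Mathlib

section
/- Let L be a nonempty level datum whose largest level k₀ satisfies k₀ < 1. Then B_L ≤ 1 − Ram(L); in particular B_L < 0. -/
open Finset

/-- The ramification order of a level datum: the least common denominator of its
elements, i.e. the lcm of the denominators (`ram ∅ = 1`). -/
def ram (L : Finset ℚ) : ℕ := L.lcm Rat.den

/-- The least common denominator `d` of the "initial segment" of `L` consisting of the
elements `≥ k` (the elements come in decreasing order `k₀ > k₁ > ⋯`). -/
def segLcm (L : Finset ℚ) (k : ℚ) : ℕ := (L.filter (fun x => k ≤ x)).lcm Rat.den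

/-- A level datum: a finite set of positive rationals such that the least common
denominators `d₀, d₁, …` of the initial segments (for the decreasing order) are all `≥ 2`
and form a strictly increasing sequence.  (Since the `d_j` are increasing, requiring
`d_j ≥ 2` for all `j` is equivalent to `d₀ ≥ 2`, i.e. to the largest element not being
an integer.) -/
def IsLevelDatum (L : Finset ℚ) : Prop :=
  (∀ k ∈ L, 0 < k) ∧
  (∀ k ∈ L, 2 ≤ segLcm L k) ∧
  (∀ k ∈ L, ∀ k' ∈ L, k' < k → segLcm L k < segLcm L k')

/-- The largest level of `L` (junk value `0` for `L = ∅`). -/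
def maxLevel (L : Finset ℚ) : ℚ := WithBot.unbotD 0 L.max

/-- The numerator `s(k) := k · Ram(L) ∈ ℤ` of a level `k` of `L`. -/
def numer (L : Finset ℚ) (k : ℚ) : ℤ := (k * (ram L : ℚ)).num

/-- `σ := k₀ · Ram(L) ∈ ℤ`, the numerator of the largest level. -/
def sigma0 (L : Finset ℚ) : ℤ := numer L (maxLevel L)

/-- `gcd(s(x) for x ∈ s, Ram L)` : the gcd of `Ram L` together with the numerators of the
elements of a subset `s ⊆ L`. -/
def gSeg (L : Finset ℚ) (s : Finset ℚ) : ℕ :=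
  Nat.gcd (ram L) (s.gcd (fun x => (numer L x).natAbs))

/-- The quantity
`B_L = (r − (s₀,r))·s₀ + Σᵢ ((s₀,…,s_{i−1},r) − (s₀,…,s_i,r))·s_i − r² + 1`
(`B_∅ = 0`), equal to the dimension of the elementary wild character variety. -/
def B (L : Finset ℚ) : ℤ :=
  (∑ k ∈ L, ((gSeg L (L.filter (fun x => k < x)) : ℤ)
      - (gSeg L (L.filter (fun x => k ≤ x)) : ℤ)) * numer L k)
    - (ram L : ℤ) ^ 2 + 1

/-- A level datum is locally minimal at infinity if it is empty, or its largest level is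
`< 1` or `> 2`. -/
def LocallyMinimal (L : Finset ℚ) : Prop :=
  L = ∅ ∨ maxLevel L < 1 ∨ 2 < maxLevel L

/-- Rescaling of a level datum by a factor `c`, removing the integer elements. -/
def rescale (L : Finset ℚ) (c : ℚ) : Finset ℚ :=
  (L.image (fun k => c * k)).filter (fun x => x.den ≠ 1)

/-- The local simplification map `S_∞` on level data: if the largest level `k₀` satisfies
`1 < k₀ < 2`, rescale all the levels by `ρ/(σ−ρ)` (where `ρ = Ram L`, `σ = k₀·ρ`) and
remove the integer levels; otherwise do nothing. -/
def Sinf (L : Finset ℚ) : Finset ℚ :=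
  if 1 < maxLevel L ∧ maxLevel L < 2 then
    rescale L ((ram L : ℚ) / ((sigma0 L : ℚ) - (ram L : ℚ)))
  else L

lemma ram_pos (L : Finset ℚ) : 0 < ram L := by
  rw [Nat.pos_iff_ne_zero]
  intro h
  rw [ram, Finset.lcm_eq_zero_iff] at h
  obtain ⟨x, -, hx⟩ := h
  exact x.den_nz hx

lemma cast_numer (L : Finset ℚ) {k : ℚ} (hk : k ∈ L) :
    ((numer L k : ℤ) : ℚ) = k * (ram L : ℚ) := by
  obtain ⟨m, hm⟩ : k.den ∣ ram L := Finset.dvd_lcm hk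
  have hden : ((k.den : ℚ)) ≠ 0 := by exact_mod_cast k.den_nz
  have : k * (ram L : ℚ) = ((k.num * m : ℤ) : ℚ) := by
    have h0 : k * (k.den:ℚ) = (k.num:ℚ) := by
      nth_rewrite 1 [← Rat.num_div_den k]
      field_simp
    rw [hm]
    push_cast
    rw [← mul_assoc, h0]
  rw [numer, this, Rat.num_intCast]

lemma telescope (F : Finset ℚ → ℤ) (L : Finset ℚ) :
    (∑ k ∈ L, (F (L.filter (fun x => k < x)) - F (L.filter (fun x => k ≤ x))))
      = F (∅ : Finset ℚ) - F L := by
  induction L using Finset.strongInduction with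
  | _ L ih =>
    rcases L.eq_empty_or_nonempty with rfl | hne
    · simp
    · set m := L.min' hne with hm
      have hmem : m ∈ L := L.min'_mem hne
      have h1 : L.filter (fun x => m ≤ x) = L := by
        apply Finset.filter_true_of_mem
        intro x hx; exact L.min'_le x hx
      have h2 : L.filter (fun x => m < x) = L.erase m := by
        ext x
        simp only [Finset.mem_filter, Finset.mem_erase]
        constructor
        · rintro ⟨hx, hlt⟩; exact ⟨ne_of_gt hlt, hx⟩
        · rintro ⟨hne', hx⟩; exact ⟨hx, lt_of_le_of_ne (L.min'_le x hx) (Ne.symm hne')⟩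
      rw [← Finset.add_sum_erase _ _ hmem, h1, h2]
      have key : ∀ k ∈ L.erase m,
          (F (L.filter (fun x => k < x)) - F (L.filter (fun x => k ≤ x)))
          = (F ((L.erase m).filter (fun x => k < x)) - F ((L.erase m).filter (fun x => k ≤ x))) := by
        intro k hk
        have hkm : m < k := lt_of_le_of_ne (L.min'_le k (Finset.mem_of_mem_erase hk))
          (Ne.symm (Finset.ne_of_mem_erase hk))
        have e1 : L.filter (fun x => k < x) = (L.erase m).filter (fun x => k < x) := by
          ext x
          simp only [Finset.mem_filter, Finset.mem_erase]
          constructor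
          · rintro ⟨hx, h⟩; exact ⟨⟨fun he => absurd (he ▸ h) (not_lt.2 hkm.le), hx⟩, h⟩
          · rintro ⟨⟨-, hx⟩, h⟩; exact ⟨hx, h⟩
        have e2 : L.filter (fun x => k ≤ x) = (L.erase m).filter (fun x => k ≤ x) := by
          ext x
          simp only [Finset.mem_filter, Finset.mem_erase]
          constructor
          · rintro ⟨hx, h⟩; exact ⟨⟨fun he => absurd (he ▸ h) (not_le.2 hkm), hx⟩, h⟩
          · rintro ⟨⟨-, hx⟩, h⟩; exact ⟨hx, h⟩
        rw [e1, e2]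
      rw [Finset.sum_congr rfl key, ih (L.erase m) (Finset.erase_ssubset hmem)]
      ring

/-- if `L` is a nonempty level datum whose largest level is `< 1`, then
`B_L ≤ 1 − Ram(L)`; in particular `B_L < 0`. -/
theorem stmt_0 (L : Finset ℚ) (hL : IsLevelDatum L) (hne : L.Nonempty)
    (hmax : maxLevel L < 1) :
    B L ≤ 1 - (ram L : ℤ) ∧ B L < 0 := by
  have hrpos : 0 < ram L := ram_pos L
  obtain ⟨k₀, hk₀⟩ := hne
  have hseg : segLcm L k₀ ∣ ram L :=
    Finset.lcm_dvd (fun x hx => Finset.dvd_lcm (Finset.mem_of_mem_filter x hx))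
  have hr2 : 2 ≤ ram L := le_trans (hL.2.1 k₀ hk₀) (Nat.le_of_dvd hrpos hseg)
  have hr2' : (2:ℤ) ≤ (ram L : ℤ) := by exact_mod_cast hr2
  have hmaxlev : maxLevel L = L.max' ⟨k₀, hk₀⟩ := by
    rw [maxLevel, ← Finset.coe_max' ⟨k₀, hk₀⟩, WithBot.unbotD_coe]
  -- bounds on numerators
  have hnum : ∀ k ∈ L, numer L k ≤ (ram L : ℤ) - 1 := by
    intro k hk
    have hk1 : k < 1 := lt_of_le_of_lt (hmaxlev ▸ Finset.le_max' L k hk) hmax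
    have hc := cast_numer L hk
    have hlt : k * (ram L : ℚ) < (ram L : ℚ) := by
      have : (0:ℚ) < (ram L : ℚ) := by exact_mod_cast hrpos
      nlinarith
    have : ((numer L k : ℤ) : ℚ) < ((ram L : ℤ) : ℚ) := by
      rw [hc]; exact_mod_cast hlt
    have h2 : numer L k < (ram L : ℤ) := by exact_mod_cast this
    omega
  -- gSeg facts
  have gpos : ∀ s : Finset ℚ, 0 < gSeg L s := fun s => Nat.gcd_pos_of_pos_left _ hrpos
  have gdvd : ∀ s t : Finset ℚ, s ⊆ t → gSeg L t ∣ gSeg L s := by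
    intro s t hst
    apply Nat.dvd_gcd (Nat.gcd_dvd_left _ _)
    apply Finset.dvd_gcd
    intro x hx
    exact (Nat.gcd_dvd_right _ _).trans (Finset.gcd_dvd (hst hx))
  have gle : ∀ s : Finset ℚ, gSeg L s ≤ ram L := fun s =>
    Nat.le_of_dvd hrpos (Nat.gcd_dvd_left _ _)
  have hcoef : ∀ k ∈ L, (0:ℤ) ≤ (gSeg L (L.filter (fun x => k < x)) : ℤ)
      - (gSeg L (L.filter (fun x => k ≤ x)) : ℤ) := by
    intro k hk
    have hsub : L.filter (fun x => k < x) ⊆ L.filter (fun x => k ≤ x) :=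
      Finset.monotone_filter_right L (fun x _ => le_of_lt)
    have := Nat.le_of_dvd (gpos _) (gdvd _ _ hsub)
    exact sub_nonneg.2 (by exact_mod_cast this)
  -- telescoping
  have htel := telescope (fun s => (gSeg L s : ℤ)) L
  have hg0 : gSeg L (∅ : Finset ℚ) = ram L := by simp [gSeg]
  have hgL : 1 ≤ gSeg L L := gpos L
  -- bound the sum
  have hsum : (∑ k ∈ L, ((gSeg L (L.filter (fun x => k < x)) : ℤ)
      - (gSeg L (L.filter (fun x => k ≤ x)) : ℤ)) * numer L k)
      ≤ ((ram L : ℤ) - 1) * ((ram L : ℤ) - 1) := by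
    calc (∑ k ∈ L, ((gSeg L (L.filter (fun x => k < x)) : ℤ)
        - (gSeg L (L.filter (fun x => k ≤ x)) : ℤ)) * numer L k)
        ≤ ∑ k ∈ L, ((gSeg L (L.filter (fun x => k < x)) : ℤ)
        - (gSeg L (L.filter (fun x => k ≤ x)) : ℤ)) * ((ram L : ℤ) - 1) := by
          apply Finset.sum_le_sum
          intro k hk
          exact mul_le_mul_of_nonneg_left (hnum k hk) (hcoef k hk)
      _ = (∑ k ∈ L, ((gSeg L (L.filter (fun x => k < x)) : ℤ)
        - (gSeg L (L.filter (fun x => k ≤ x)) : ℤ))) * ((ram L : ℤ) - 1) := by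
          rw [Finset.sum_mul]
      _ = ((ram L : ℤ) - (gSeg L L : ℤ)) * ((ram L : ℤ) - 1) := by
          rw [htel, hg0]
      _ ≤ ((ram L : ℤ) - 1) * ((ram L : ℤ) - 1) := by
          apply mul_le_mul_of_nonneg_right _ (by linarith)
          have : (1:ℤ) ≤ (gSeg L L : ℤ) := by exact_mod_cast hgL
          linarith
  have hB : B L ≤ 1 - (ram L : ℤ) := by
    rw [B]
    nlinarith [hsum, hr2']
  exact ⟨hB, lt_of_le_of_lt hB (by linarith)⟩
end

section
/- Let L be a nonempty level datum whose largest level k satisfies k > 2, let ρ := Ram(L) and s := k·ρ ∈ ℤ, and suppose B_L = 2n for some integer n ≥ 0. Then s − ρ < 6n. -/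
open Finset

/-- if `L` is a nonempty level datum with largest level `k > 2`,
`ρ = Ram(L)`, `s = k·ρ`, and `B_L = 2n` with `n ≥ 0`, then `s − ρ < 6n`. -/
theorem stmt_2 (L : Finset ℚ) (hL : IsLevelDatum L) (hne : L.Nonempty)
    (hmax : 2 < maxLevel L) (n : ℕ) (hB : B L = 2 * (n : ℤ)) :
    sigma0 L - (ram L : ℤ) < 6 * (n : ℤ) := by
  classical
  obtain ⟨m, hm⟩ := Finset.max_of_nonempty hne
  have hk0eq : maxLevel L = m := by simp [maxLevel, hm]
  set k0 : ℚ := maxLevel L with hk0def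
  have hk0mem : k0 ∈ L := by rw [hk0eq]; exact Finset.mem_of_max hm
  have hle : ∀ x ∈ L, x ≤ k0 := by
    intro x hx
    have := Finset.le_max hx
    rw [hm, hk0eq] at *
    exact_mod_cast this
  -- ρ
  set ρ : ℕ := ram L with hρdef
  have hρ0 : ρ ≠ 0 := by
    simp only [hρdef, ram, Ne, Finset.lcm_eq_zero_iff]
    rintro ⟨x, -, hx⟩
    exact x.den_nz hx
  have hρpos : 0 < ρ := Nat.pos_of_ne_zero hρ0
  have hρposQ : (0 : ℚ) < ρ := by exact_mod_cast hρpos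
  have hdenρ : k0.den ∣ ρ := Finset.dvd_lcm hk0mem
  -- σ
  set σ : ℤ := numer L k0 with hσdef
  obtain ⟨c, hc⟩ := hdenρ
  have hcastq : (k0 * (ρ : ℚ)) = ((k0.num * c : ℤ) : ℚ) := by
    rw [hc]
    push_cast
    rw [← mul_assoc, Rat.mul_den_eq_num]
  have hσval : σ = k0.num * c := by
    rw [hσdef, numer, hcastq, Rat.num_intCast]
  have hσcast : (σ : ℚ) = k0 * (ρ : ℚ) := by rw [hσval, hcastq]
  have hσgt : 2 * (ρ : ℤ) < σ := by
    have h1 : (2 : ℚ) * (ρ : ℚ) < k0 * (ρ : ℚ) :=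
      mul_lt_mul_of_pos_right (by rw [hk0def]; exact hmax) hρposQ
    rw [← hσcast] at h1
    exact_mod_cast h1
  -- g
  set g : ℕ := Nat.gcd ρ σ.natAbs with hgdef
  have hgρ : g ∣ ρ := Nat.gcd_dvd_left _ _
  have hgσ : (g : ℤ) ∣ σ := Int.dvd_natAbs.mp (Int.ofNat_dvd.mpr (Nat.gcd_dvd_right _ _))
  have hgpos : 0 < g := Nat.gcd_pos_of_pos_left _ hρpos
  -- filter ≤ at k0 is {k0}
  have hfle : L.filter (fun x => k0 ≤ x) = {k0} := by
    ext x
    simp only [Finset.mem_filter, Finset.mem_singleton]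
    constructor
    · rintro ⟨hx, hxk⟩; exact le_antisymm (hle x hx) hxk
    · rintro rfl; exact ⟨hk0mem, le_refl _⟩
  have hflt : L.filter (fun x => k0 < x) = ∅ := by
    ext x
    simp only [Finset.mem_filter, Finset.notMem_empty, iff_false, not_and, not_lt]
    exact hle x
  have hden2 : 2 ≤ k0.den := by
    have := hL.2.1 k0 hk0mem
    rwa [segLcm, hfle, Finset.lcm_singleton, normalize_eq] at this
  -- g < ρ
  have hgne : g ≠ ρ := by
    intro hgeq
    have hρσ : (ρ : ℤ) ∣ σ := hgeq ▸ hgσ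
    obtain ⟨t, ht⟩ := hρσ
    have : k0 = (t : ℚ) := by
      have h1 : (σ : ℚ) = (ρ : ℚ) * t := by rw [ht]; push_cast; ring
      rw [hσcast] at h1
      exact mul_right_cancel₀ (ne_of_gt hρposQ) (by rw [h1]; ring)
    have : k0.den = 1 := by rw [this]; exact Rat.den_intCast t
    omega
  have h2g : 2 * g ≤ ρ := by
    obtain ⟨d, hd⟩ := hgρ
    rcases Nat.lt_or_ge d 2 with hd2 | hd2
    · interval_cases d <;> omega
    · calc 2 * g = g * 2 := by ring
        _ ≤ g * d := Nat.mul_le_mul_left g hd2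
        _ = ρ := hd.symm
  have hσge : 2 * (ρ : ℤ) + g ≤ σ := by
    have hdvd : (g : ℤ) ∣ σ - 2 * ρ := by
      exact dvd_sub hgσ (Dvd.dvd.mul_left (Int.ofNat_dvd.mpr hgρ) 2)
    have := Int.le_of_dvd (by omega) hdvd
    omega
  -- each summand in B is nonnegative
  have hnumpos : ∀ k ∈ L, 0 < numer L k := by
    intro k hk
    have hkpos : 0 < k := hL.1 k hk
    have : (0 : ℚ) < k * (ρ : ℚ) := mul_pos hkpos hρposQ
    exact Rat.num_pos.mpr this
  have hgseg_dvd : ∀ s t : Finset ℚ, s ⊆ t → gSeg L t ∣ gSeg L s := by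
    intro s t hst
    apply Nat.dvd_gcd (Nat.gcd_dvd_left _ _)
    apply Finset.dvd_gcd
    intro x hx
    exact (Nat.gcd_dvd_right _ _).trans (Finset.gcd_dvd (hst hx))
  have hgseg_pos : ∀ s : Finset ℚ, 0 < gSeg L s := fun s =>
    Nat.gcd_pos_of_pos_left _ hρpos
  have hterm : ∀ k ∈ L, (0 : ℤ) ≤
      ((gSeg L (L.filter (fun x => k < x)) : ℤ)
        - (gSeg L (L.filter (fun x => k ≤ x)) : ℤ)) * numer L k := by
    intro k hk
    apply mul_nonneg _ (le_of_lt (hnumpos k hk))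
    have hsub : L.filter (fun x => k < x) ⊆ L.filter (fun x => k ≤ x) := by
      intro x hx
      simp only [Finset.mem_filter] at hx ⊢
      exact ⟨hx.1, le_of_lt hx.2⟩
    have := Nat.le_of_dvd (hgseg_pos _) (hgseg_dvd _ _ hsub)
    simp only [sub_nonneg]
    exact_mod_cast this
  -- the term at k0
  have htermk0 : ((gSeg L (L.filter (fun x => k0 < x)) : ℤ)
        - (gSeg L (L.filter (fun x => k0 ≤ x)) : ℤ)) * numer L k0
      = ((ρ : ℤ) - g) * σ := by
    rw [hflt, hfle]
    have h1 : gSeg L ∅ = ρ := by simp [gSeg, hρdef]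
    have h2 : gSeg L {k0} = g := by
      rw [gSeg, Finset.gcd_singleton, normalize_eq]
    rw [h1, h2, ← hσdef]
  have hsum : ((ρ : ℤ) - g) * σ ≤
      ∑ k ∈ L, ((gSeg L (L.filter (fun x => k < x)) : ℤ)
        - (gSeg L (L.filter (fun x => k ≤ x)) : ℤ)) * numer L k := by
    rw [← htermk0]
    exact Finset.single_le_sum hterm hk0mem
  have hBge : ((ρ : ℤ) - g) * σ - (ρ : ℤ) ^ 2 + 1 ≤ B L := by
    rw [B]
    have : (ram L : ℤ) = (ρ : ℤ) := by rw [hρdef]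
    rw [this]
    linarith
  rw [hB] at hBge
  have hgoal : sigma0 L - (ram L : ℤ) = σ - ρ := by
    rw [sigma0, ← hk0def, ← hσdef, hρdef]
  rw [hgoal]
  have hgρZ : 2 * (g : ℤ) ≤ ρ := by exact_mod_cast h2g
  have hgposZ : (1 : ℤ) ≤ g := by exact_mod_cast hgpos
  have hρ2 : (2 : ℤ) ≤ ρ := by
    have := hden2
    have := Nat.le_of_dvd hρpos ⟨c, hc⟩
    omega
  nlinarith [mul_nonneg (by linarith : (0:ℤ) ≤ σ - 2*ρ - g) (by linarith : (0:ℤ) ≤ 3*(ρ:ℤ) - 3*g - 1),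
    mul_nonneg (by linarith : (0:ℤ) ≤ (ρ:ℤ) - 2*g) (by linarith : (0:ℤ) ≤ (ρ:ℤ) - 2*g),
    mul_pos (by linarith : (0:ℤ) < (g:ℤ)) (by linarith : (0:ℤ) < (g:ℤ)),
    mul_nonneg (by linarith : (0:ℤ) ≤ (ρ:ℤ) - 2*g) (by linarith : (0:ℤ) ≤ (g:ℤ) - 1)]
end

section
/- Let L be a level datum such that L is empty, or the largest level of L is < 1, or the largest level of L is > 2 (i.e. L is a locally minimal level datum at infinity). Then B_L = 4 if and only if L = {7/2}. -/
open Finset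

section Aux

lemma numer_cast {L : Finset ℚ} {k : ℚ} (hk : k ∈ L) :
    ((numer L k : ℤ) : ℚ) = k * (ram L : ℚ) := by
  obtain ⟨m, hm⟩ : k.den ∣ ram L := Finset.dvd_lcm hk
  have h : k * (ram L : ℚ) = ((k.num * m : ℤ) : ℚ) := by
    rw [hm]
    push_cast
    rw [← mul_assoc, Rat.mul_den_eq_num]
  rw [numer, h, Rat.num_intCast]

lemma gSeg_pos (L s : Finset ℚ) : 0 < gSeg L s := Nat.gcd_pos_of_pos_left _ (ram_pos L)

lemma gSeg_anti (L : Finset ℚ) {s t : Finset ℚ} (h : s ⊆ t) : gSeg L t ∣ gSeg L s :=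
  Nat.dvd_gcd (Nat.gcd_dvd_left _ _)
    ((Nat.gcd_dvd_right _ _).trans (Finset.dvd_gcd fun b hb => Finset.gcd_dvd (h hb)))

lemma gSeg_le (L : Finset ℚ) {s t : Finset ℚ} (h : s ⊆ t) : gSeg L t ≤ gSeg L s :=
  Nat.le_of_dvd (gSeg_pos L s) (gSeg_anti L h)

lemma segLcm_dvd_ram (L : Finset ℚ) (k : ℚ) : segLcm L k ∣ ram L :=
  Finset.lcm_dvd fun b hb => Finset.dvd_lcm (Finset.mem_of_mem_filter b hb)

lemma tele (L : Finset ℚ) (T : Finset ℚ) : ∀ b : ℚ, (∀ k ∈ T, k < b) →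
    ∑ k ∈ T, ((gSeg L (L.filter (fun x => k < x)) : ℤ)
        - (gSeg L (L.filter (fun x => k ≤ x)) : ℤ))
      ≤ (gSeg L (L.filter (fun x => b ≤ x)) : ℤ) - 1 := by
  induction T using Finset.induction_on_max with
  | empty =>
    intro b _
    rw [Finset.sum_empty]
    have := gSeg_pos L (L.filter (fun x => b ≤ x))
    omega
  | insert a s ha ih =>
    intro b hb
    have hab : a < b := hb a (Finset.mem_insert_self a s)
    rw [Finset.sum_insert (fun h => lt_irrefl a (ha a h))]
    have h1 := ih a ha
    have h2 : gSeg L (L.filter (fun x => a < x)) ≤ gSeg L (L.filter (fun x => b ≤ x)) :=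
      gSeg_le L (Finset.monotone_filter_right L (fun x _ hx => lt_of_lt_of_le hab hx))
    have h2' : (gSeg L (L.filter (fun x => a < x)) : ℤ)
        ≤ gSeg L (L.filter (fun x => b ≤ x)) := by exact_mod_cast h2
    linarith

end Aux

/-- for a locally minimal level datum at infinity, `B_L = 4 ↔ L = {7/2}`. -/
theorem stmt_5 (L : Finset ℚ) (hL : IsLevelDatum L) (hmin : LocallyMinimal L) :
    B L = 4 ↔ L = {(7 : ℚ) / 2} := by
  constructor
  · intro hB
    have hne : L.Nonempty := by
      rcases Finset.eq_empty_or_nonempty L with h | h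
      · exfalso; rw [h, B] at hB; simp [ram] at hB
      · exact h
    set k₀ := L.max' hne with hk₀def
    have hk₀ : k₀ ∈ L := L.max'_mem hne
    have hmax : ∀ k ∈ L, k ≤ k₀ := fun k hk => L.le_max' k hk
    have hmaxlevel : maxLevel L = k₀ := by
      rw [maxLevel, ← Finset.coe_max' hne, WithBot.unbotD_coe]
    have hfilt_lt : L.filter (fun x => k₀ < x) = ∅ := by
      rw [Finset.filter_eq_empty_iff]
      exact fun x hx => not_lt.2 (hmax x hx)
    have hfilt_le : L.filter (fun x => k₀ ≤ x) = {k₀} := by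
      ext x
      simp only [Finset.mem_filter, Finset.mem_singleton]
      constructor
      · rintro ⟨hx, hle⟩; exact le_antisymm (hmax x hx) hle
      · rintro rfl; exact ⟨hk₀, le_refl _⟩
    have hseg0 : segLcm L k₀ = k₀.den := by
      rw [segLcm, hfilt_le, Finset.lcm_singleton, normalize_eq]
    have hden2 : 2 ≤ k₀.den := by
      have := hL.2.1 k₀ hk₀; rwa [hseg0] at this
    have hr2 : 2 ≤ ram L :=
      le_trans hden2 (Nat.le_of_dvd (ram_pos L) (Finset.dvd_lcm hk₀))
    have hrq : (0:ℚ) < (ram L : ℚ) := by exact_mod_cast ram_pos L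
    have hG_lt : gSeg L (L.filter (fun x => k₀ < x)) = ram L := by
      rw [hfilt_lt, gSeg, Finset.gcd_empty, Nat.gcd_zero_right]
    set s₀ := numer L k₀ with hs₀def
    set g := Nat.gcd (ram L) s₀.natAbs with hgdef
    have hG_le : gSeg L (L.filter (fun x => k₀ ≤ x)) = g := by
      rw [hfilt_le, gSeg, Finset.gcd_singleton, normalize_eq]
    have hs₀cast : ((s₀ : ℤ) : ℚ) = k₀ * (ram L : ℚ) := numer_cast hk₀
    have hnumpos : ∀ k ∈ L, 0 < numer L k := by
      intro k hk
      have h := numer_cast hk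
      have : (0:ℚ) < ((numer L k : ℤ):ℚ) := by
        rw [h]; exact mul_pos (hL.1 k hk) hrq
      exact_mod_cast this
    have hs₀pos : 0 < s₀ := hnumpos k₀ hk₀
    have hgpos : 0 < g := Nat.gcd_pos_of_pos_left _ (ram_pos L)
    have hgdvdr : g ∣ ram L := Nat.gcd_dvd_left _ _
    have hgne : g ≠ ram L := by
      intro h
      have hr1 : ram L ∣ s₀.natAbs := h ▸ Nat.gcd_dvd_right (ram L) s₀.natAbs
      have hr2' : ((ram L : ℤ)) ∣ s₀ :=
        Int.dvd_natAbs.1 (Int.natCast_dvd_natCast.2 hr1)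
      obtain ⟨t, ht⟩ := hr2'
      have hk₀t : k₀ = (t : ℚ) := by
        have h2 := hs₀cast
        rw [ht] at h2
        push_cast at h2
        have h3 : k₀ * (ram L : ℚ) = (t:ℚ) * (ram L : ℚ) := by linarith
        exact mul_right_cancel₀ (ne_of_gt hrq) h3
      have : k₀.den = 1 := by rw [hk₀t]; exact Rat.den_intCast t
      omega
    have h2g : 2 * g ≤ ram L := by
      obtain ⟨c, hc⟩ := hgdvdr
      have hc0 : c ≠ 0 := by
        rintro rfl; rw [Nat.mul_zero] at hc; have := ram_pos L; omega
      have hc1 : c ≠ 1 := by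
        rintro rfl; rw [Nat.mul_one] at hc; exact hgne hc.symm
      have : 2 ≤ c := by omega
      calc 2 * g = g * 2 := by ring
        _ ≤ g * c := Nat.mul_le_mul_left g this
        _ = ram L := hc.symm
    have hcoeff : ∀ k : ℚ, 0 ≤ (gSeg L (L.filter (fun x => k < x)) : ℤ)
        - (gSeg L (L.filter (fun x => k ≤ x)) : ℤ) := by
      intro k
      have h := gSeg_le L (Finset.monotone_filter_right L
        (p := fun x => k < x) (q := fun x => k ≤ x) (fun x _ hx => le_of_lt hx))
      rw [sub_nonneg]
      exact_mod_cast h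
    have hsum : ∑ k ∈ L, ((gSeg L (L.filter (fun x => k < x)) : ℤ)
        - (gSeg L (L.filter (fun x => k ≤ x)) : ℤ)) * numer L k = (ram L : ℤ)^2 + 3 := by
      rw [B] at hB; linarith
    rcases hmin with hmin | hmin | hmin
    · exact absurd hmin hne.ne_empty
    · -- maxLevel < 1 : impossible
      exfalso
      rw [hmaxlevel] at hmin
      have hnum_le : ∀ k ∈ L, numer L k ≤ (ram L : ℤ) - 1 := by
        intro k hk
        have hc := numer_cast hk
        have hklt : k < 1 := lt_of_le_of_lt (hmax k hk) hmin
        have h1 : ((numer L k : ℤ):ℚ) < (((ram L : ℤ)):ℚ) := by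
          rw [hc]; push_cast; nlinarith
        have h2 : (numer L k) < (ram L : ℤ) := by exact_mod_cast h1
        omega
      have hb1 : ∑ k ∈ L, ((gSeg L (L.filter (fun x => k < x)) : ℤ)
            - (gSeg L (L.filter (fun x => k ≤ x)) : ℤ)) * numer L k
          ≤ ∑ k ∈ L, ((gSeg L (L.filter (fun x => k < x)) : ℤ)
            - (gSeg L (L.filter (fun x => k ≤ x)) : ℤ)) * ((ram L : ℤ) - 1) :=
        Finset.sum_le_sum fun k hk =>
          mul_le_mul_of_nonneg_left (hnum_le k hk) (hcoeff k)
      rw [← Finset.sum_mul] at hb1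
      have hb2 := tele L L (k₀ + 1) (fun k hk => lt_of_le_of_lt (hmax k hk) (lt_add_one k₀))
      have hfe : L.filter (fun x => k₀ + 1 ≤ x) = ∅ := by
        rw [Finset.filter_eq_empty_iff]
        intro x hx
        exact not_le.2 (lt_of_le_of_lt (hmax x hx) (lt_add_one k₀))
      rw [hfe, gSeg, Finset.gcd_empty, Nat.gcd_zero_right] at hb2
      have hrz : (2:ℤ) ≤ (ram L : ℤ) := by exact_mod_cast hr2
      have hcoefftot : 0 ≤ ∑ k ∈ L, ((gSeg L (L.filter (fun x => k < x)) : ℤ)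
          - (gSeg L (L.filter (fun x => k ≤ x)) : ℤ)) :=
        Finset.sum_nonneg fun k _ => hcoeff k
      have hb3 : (∑ k ∈ L, ((gSeg L (L.filter (fun x => k < x)) : ℤ)
          - (gSeg L (L.filter (fun x => k ≤ x)) : ℤ))) * ((ram L : ℤ) - 1)
          ≤ ((ram L : ℤ) - 1) * ((ram L : ℤ) - 1) :=
        mul_le_mul_of_nonneg_right hb2 (by linarith)
      nlinarith [hsum, hb1, hb3, hrz]
    · -- maxLevel > 2
      rw [hmaxlevel] at hmin
      rw [← Finset.add_sum_erase _ _ hk₀, hG_lt, hG_le] at hsum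
      have herase_nonneg : 0 ≤ ∑ k ∈ L.erase k₀,
          ((gSeg L (L.filter (fun x => k < x)) : ℤ)
            - (gSeg L (L.filter (fun x => k ≤ x)) : ℤ)) * numer L k :=
        Finset.sum_nonneg fun k hk =>
          mul_nonneg (hcoeff k) (le_of_lt (hnumpos k (Finset.mem_of_mem_erase hk)))
      have hterm0 : ((ram L : ℤ) - g) * s₀ ≤ (ram L : ℤ)^2 + 3 := by linarith
      have hs₀gt : 2 * (ram L : ℤ) < s₀ := by
        have h1 : ((2 * (ram L : ℤ) : ℤ) : ℚ) < ((s₀:ℤ):ℚ) := by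
          rw [hs₀cast]; push_cast; nlinarith
        exact_mod_cast h1
      have hgs : (g:ℤ) ∣ s₀ :=
        Int.dvd_natAbs.1 (Int.natCast_dvd_natCast.2 (Nat.gcd_dvd_right _ _))
      have hgr' : (g:ℤ) ∣ (ram L : ℤ) := Int.natCast_dvd_natCast.2 hgdvdr
      have hs₀ge : 2 * (ram L : ℤ) + g ≤ s₀ := by
        have hd : (g:ℤ) ∣ (s₀ - 2 * (ram L : ℤ)) := dvd_sub hgs (hgr'.mul_left 2)
        have := Int.le_of_dvd (by omega) hd
        omega
      have hgz : (1:ℤ) ≤ (g:ℤ) := by exact_mod_cast hgpos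
      have h2gz : 2 * (g:ℤ) ≤ (ram L : ℤ) := by exact_mod_cast h2g
      have hrz : (2:ℤ) ≤ (ram L : ℤ) := by exact_mod_cast hr2
      have hRG : ((ram L : ℤ) - g) * (2 * (ram L : ℤ) + g) ≤ (ram L : ℤ)^2 + 3 :=
        le_trans (mul_le_mul_of_nonneg_left hs₀ge (by linarith)) hterm0
      have hr3 : ram L ≤ 3 := by
        by_contra hcon
        have hR4 : (4:ℤ) ≤ (ram L : ℤ) := by exact_mod_cast Nat.not_le.1 hcon
        nlinarith [hRG, hR4, hgz, h2gz,
          mul_le_mul_of_nonneg_right h2gz (le_trans (by norm_num) hR4),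
          mul_self_le_mul_self (by linarith : (0:ℤ) ≤ 2 * g) h2gz,
          mul_self_le_mul_self (by norm_num : (0:ℤ) ≤ 4) hR4]
      have hg1 : g = 1 := by omega
      have hram2 : ram L = 2 := by
        rcases Nat.lt_or_ge (ram L) 3 with h | h
        · omega
        · exfalso
          have h3 : ram L = 3 := by omega
          rw [h3, hg1] at hterm0 hs₀ge
          push_cast at hterm0 hs₀ge
          linarith
      -- now ram L = 2, g = 1
      have hGone : gSeg L {k₀} = 1 := by
        rw [← hfilt_le, hG_le, hg1]
      have herase0 : ∀ k ∈ L.erase k₀,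
          ((gSeg L (L.filter (fun x => k < x)) : ℤ)
            - (gSeg L (L.filter (fun x => k ≤ x)) : ℤ)) * numer L k = 0 := by
        intro k hk
        have hkL : k ∈ L := Finset.mem_of_mem_erase hk
        have hklt : k < k₀ := lt_of_le_of_ne (hmax k hkL) (Finset.ne_of_mem_erase hk)
        have hsub1 : ({k₀} : Finset ℚ) ⊆ L.filter (fun x => k < x) := by
          intro x hx
          rw [Finset.mem_singleton] at hx
          subst hx
          exact Finset.mem_filter.2 ⟨hk₀, hklt⟩
        have hsub2 : ({k₀} : Finset ℚ) ⊆ L.filter (fun x => k ≤ x) := by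
          intro x hx
          rw [Finset.mem_singleton] at hx
          subst hx
          exact Finset.mem_filter.2 ⟨hk₀, le_of_lt hklt⟩
        have e1 : gSeg L (L.filter (fun x => k < x)) = 1 := by
          have h := gSeg_anti L hsub1
          rw [hGone, Nat.dvd_one] at h
          exact h
        have e2 : gSeg L (L.filter (fun x => k ≤ x)) = 1 := by
          have h := gSeg_anti L hsub2
          rw [hGone, Nat.dvd_one] at h
          exact h
        rw [e1, e2]
        norm_num
      have hsum_erase : ∑ k ∈ L.erase k₀,
          ((gSeg L (L.filter (fun x => k < x)) : ℤ)
            - (gSeg L (L.filter (fun x => k ≤ x)) : ℤ)) * numer L k = 0 :=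
        Finset.sum_eq_zero herase0
      rw [hsum_erase] at hsum
      have hs7 : s₀ = 7 := by
        rw [hram2, hg1] at hsum
        push_cast at hsum
        linarith
      have hk₀val : k₀ = 7/2 := by
        have hc := hs₀cast
        rw [hs7, hram2] at hc
        push_cast at hc
        linarith
      rw [Finset.eq_singleton_iff_unique_mem]
      refine ⟨hk₀val ▸ hk₀, fun x hx => ?_⟩
      by_contra hxne
      have hxlt : x < k₀ := lt_of_le_of_ne (hmax x hx) (fun h => hxne (h.symm ▸ hk₀val.symm ▸ rfl))
      have hlt := hL.2.2 k₀ hk₀ x hx hxlt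
      have hd := segLcm_dvd_ram L x
      have hseg2 : 2 ≤ segLcm L k₀ := hL.2.1 k₀ hk₀
      have hle := Nat.le_of_dvd (ram_pos L) hd
      rw [hram2] at hle
      omega
  · intro h
    subst h
    have hram : ram {(7:ℚ)/2} = 2 := by
      rw [ram, Finset.lcm_singleton]; norm_num
    have hnum : numer {(7:ℚ)/2} ((7:ℚ)/2) = 7 := by
      rw [numer, hram]; norm_num
    rw [B, Finset.sum_singleton, hram, hnum]
    rw [Finset.filter_singleton, Finset.filter_singleton]
    norm_num [gSeg, hram, hnum]
end

section
/- Let L be a nonempty level datum whose largest level k₀ satisfies 1 < k₀ < 2, let ρ := Ram(L) and σ := k₀·ρ ∈ ℤ (so ρ < σ < 2ρ). Then: (a) for every element k of L other than the largest one, the rescaled rational (ρ/(σ−ρ))·k is not an integer; (b) the set L′ := {(ρ/(σ−ρ))·k : k ∈ L} with its integer elements removed (at most the rescaled largest level (σ/(σ−ρ)) can be an integer) is again a level datum; and (c) Ram(L′) = σ − ρ, which is strictly smaller than ρ = Ram(L). -/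
open Finset

lemma aux_div_dvd_div {a b ρ : ℕ} (hba : b ∣ a) (haρ : a ∣ ρ) : ρ / a ∣ ρ / b := by
  obtain ⟨t, rfl⟩ := hba
  obtain ⟨m, rfl⟩ := haρ
  rcases eq_or_ne b 0 with rfl | hb
  · simp
  rcases eq_or_ne t 0 with rfl | ht
  · simp
  rw [Nat.mul_div_cancel_left _ (by positivity), mul_assoc,
    Nat.mul_div_cancel_left _ (by positivity)]
  exact Dvd.intro_left t rfl

lemma aux_lcm_pair {N a b : ℕ} (hN : N ≠ 0) (ha : a ∣ N) (hb : b ∣ N) :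
    Nat.lcm (N / a) (N / b) = N / Nat.gcd a b := by
  have ha0 : a ≠ 0 := fun h => hN (by simpa [h] using ha)
  have hg : Nat.gcd a b ∣ N := (Nat.gcd_dvd_left a b).trans ha
  have hgpos : 0 < Nat.gcd a b := Nat.gcd_pos_of_pos_left _ (Nat.pos_of_ne_zero ha0)
  apply Nat.dvd_antisymm
  · exact Nat.lcm_dvd (aux_div_dvd_div (Nat.gcd_dvd_left a b) ha)
      (aux_div_dvd_div (Nat.gcd_dvd_right a b) hb)
  · have h1 : N ∣ a * Nat.lcm (N / a) (N / b) := by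
      obtain ⟨u, hu⟩ := Nat.dvd_lcm_left (N / a) (N / b)
      rw [hu, ← mul_assoc, Nat.mul_div_cancel' ha]
      exact Dvd.intro u rfl
    have h2 : N ∣ b * Nat.lcm (N / a) (N / b) := by
      obtain ⟨u, hu⟩ := Nat.dvd_lcm_right (N / a) (N / b)
      rw [hu, ← mul_assoc, Nat.mul_div_cancel' hb]
      exact Dvd.intro u rfl
    have h3 : N ∣ Nat.gcd a b * Nat.lcm (N / a) (N / b) := by
      have := Nat.dvd_gcd h1 h2
      rwa [Nat.gcd_mul_right] at this
    conv at h3 => lhs; rw [← Nat.mul_div_cancel' hg]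
    exact (mul_dvd_mul_iff_left (a := Nat.gcd a b) (by positivity)).mp h3

lemma aux_finset_lcm_div {s : Finset ℚ} {f : ℚ → ℕ} {N : ℕ} (hN : N ≠ 0)
    (h : ∀ a ∈ s, f a ∣ N) : s.lcm (fun a => N / f a) = N / Nat.gcd N (s.gcd f) := by
  induction s using Finset.induction with
  | empty => simp [Nat.div_self (Nat.pos_of_ne_zero hN)]
  | @insert a s ha ih =>
    have hfa : f a ∣ N := h a (mem_insert_self a s)
    rw [Finset.lcm_insert, Finset.gcd_insert,
      ih (fun x hx => h x (mem_insert_of_mem hx))]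
    have hg' : Nat.gcd N (s.gcd f) ∣ N := Nat.gcd_dvd_left _ _
    show Nat.lcm (N / f a) (N / Nat.gcd N (s.gcd f)) = _
    rw [aux_lcm_pair hN hfa hg']
    congr 1
    show Nat.gcd (f a) (Nat.gcd N (s.gcd f)) = Nat.gcd N (Nat.gcd (f a) (s.gcd f))
    rw [← Nat.gcd_assoc, Nat.gcd_comm (f a) N, Nat.gcd_assoc]

lemma aux_mul_eq_int {q : ℚ} {R : ℕ} (h : q.den ∣ R) :
    q * (R : ℚ) = ((q.num * ((R / q.den : ℕ) : ℤ) : ℤ) : ℚ) := by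
  obtain ⟨m, hm⟩ := h
  have hden : (q.den : ℚ) ≠ 0 := by exact_mod_cast q.den_nz
  have hm' : R / q.den = m := by rw [hm, Nat.mul_div_cancel_left _ q.pos]
  rw [hm', hm]
  push_cast
  rw [← mul_assoc, Rat.mul_den_eq_num]

lemma aux_den_dvd_of_mul_int {q : ℚ} {R : ℕ} (hR : R ≠ 0) {z : ℤ}
    (h : q * (R : ℚ) = (z : ℚ)) : q.den ∣ R := by
  have hq : q = (z : ℚ) / (R : ℚ) := by
    field_simp at h ⊢
    linear_combination h
  have h2 := Rat.den_dvd z (R : ℤ)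
  rw [Rat.divInt_eq_div, show (((R : ℤ) : ℚ)) = (R : ℚ) by push_cast; ring, ← hq] at h2
  exact_mod_cast h2

lemma aux_den_formula {q : ℚ} {R : ℕ} (hR : R ≠ 0) (h : q.den ∣ R) :
    q.den = R / Nat.gcd (q * (R : ℚ)).num.natAbs R := by
  obtain ⟨m, hmm⟩ := h
  have hm0 : m ≠ 0 := by rintro rfl; exact hR (by simpa using hmm)
  have hm' : R / q.den = m := by rw [hmm, Nat.mul_div_cancel_left _ q.pos]
  have hnum : (q * (R : ℚ)).num = q.num * (m : ℤ) := by
    rw [aux_mul_eq_int ⟨m, hmm⟩, hm', Rat.num_intCast]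
  rw [hnum, Int.natAbs_mul, Int.natAbs_natCast, hmm, Nat.gcd_mul_right, q.reduced,
    one_mul, Nat.mul_div_cancel _ (Nat.pos_of_ne_zero hm0)]

lemma aux_gcd_absorb (s : Finset ℚ) (g : ℚ → ℕ) (N : ℕ) :
    Nat.gcd N (s.gcd (fun a => Nat.gcd (g a) N)) = Nat.gcd N (s.gcd g) := by
  apply Nat.dvd_antisymm
  · exact Nat.dvd_gcd (Nat.gcd_dvd_left _ _) (Finset.dvd_gcd fun a ha =>
      ((Nat.gcd_dvd_right N _).trans (Finset.gcd_dvd ha)).trans (Nat.gcd_dvd_left _ _))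
  · exact Nat.dvd_gcd (Nat.gcd_dvd_left _ _) (Finset.dvd_gcd fun a ha =>
      Nat.dvd_gcd ((Nat.gcd_dvd_right N _).trans (Finset.gcd_dvd ha))
        (Nat.gcd_dvd_left _ _))

lemma aux_lcm_formula (t : Finset ℚ) (g f : ℚ → ℕ) (N : ℕ) (hN : N ≠ 0)
    (h : ∀ k ∈ t, g k = N / Nat.gcd (f k) N) :
    t.lcm g = N / Nat.gcd N (t.gcd f) := by
  rw [Finset.lcm_congr rfl h,
    aux_finset_lcm_div hN (fun a _ => Nat.gcd_dvd_right _ _), aux_gcd_absorb]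

lemma aux_gcd_filter_congr (s : Finset ℚ) (f : ℚ → ℕ) (N : ℕ)
    (p q : ℚ → Prop) [DecidablePred p] [DecidablePred q]
    (h1 : ∀ a ∈ s, p a → q a) (h2 : ∀ a ∈ s, q a → ¬ p a → N ∣ f a) :
    Nat.gcd N ((s.filter p).gcd f) = Nat.gcd N ((s.filter q).gcd f) := by
  apply Nat.dvd_antisymm
  · refine Nat.dvd_gcd (Nat.gcd_dvd_left _ _) (Finset.dvd_gcd fun a ha => ?_)
    rw [Finset.mem_filter] at ha
    by_cases hp : p a
    · exact (Nat.gcd_dvd_right N _).trans (Finset.gcd_dvd (Finset.mem_filter.mpr ⟨ha.1, hp⟩))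
    · exact (Nat.gcd_dvd_left N _).trans (h2 a ha.1 ha.2 hp)
  · refine Nat.dvd_gcd (Nat.gcd_dvd_left _ _) (Finset.dvd_gcd fun a ha => ?_)
    rw [Finset.mem_filter] at ha
    exact (Nat.gcd_dvd_right N _).trans
      (Finset.gcd_dvd (Finset.mem_filter.mpr ⟨ha.1, h1 a ha.1 ha.2⟩))

lemma aux_div_lt {n a b : ℕ} (hn : n ≠ 0) (hb : b ∣ n) (hab : a ∣ b) (hne : a ≠ b) :
    n / b < n / a := by
  have hb0 : b ≠ 0 := fun h => hn (by simpa [h] using hb)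
  have ha0 : a ≠ 0 := fun h => hb0 (by simpa [h] using hab)
  obtain ⟨t, rfl⟩ := hab
  obtain ⟨m, rfl⟩ := hb
  have ha' : a ≠ 0 := ha0
  have ht0 : t ≠ 0 := by rintro rfl; simp at hn
  have hm0 : m ≠ 0 := by rintro rfl; simp at hn
  have ht : 2 ≤ t := by
    rcases Nat.lt_or_ge t 2 with h | h
    · interval_cases t <;> simp_all
    · exact h
  rw [Nat.mul_div_cancel_left m (by positivity), show a * t * m = a * (t * m) by ring,
    Nat.mul_div_cancel_left _ (by positivity : 0 < a)]
  have h2 : 2 * m ≤ t * m := Nat.mul_le_mul_right m ht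
  omega


/-- if the largest level `k₀` of a nonempty level datum `L` satisfies
`1 < k₀ < 2`, with `ρ = Ram(L)`, `σ = k₀·ρ ∈ ℤ`, then (a) no level other than the largest
becomes an integer after rescaling by `ρ/(σ−ρ)`; (b) the rescaled set with integer
elements removed is again a level datum; (c) its ramification order is `σ − ρ < ρ`. -/
theorem stmt_7 (L : Finset ℚ) (hL : IsLevelDatum L) (hne : L.Nonempty)
    (h1 : 1 < maxLevel L) (h2 : maxLevel L < 2) :
    (∀ k ∈ L, k ≠ maxLevel L →
      ((ram L : ℚ) / ((sigma0 L : ℚ) - (ram L : ℚ)) * k).den ≠ 1) ∧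
    IsLevelDatum (rescale L ((ram L : ℚ) / ((sigma0 L : ℚ) - (ram L : ℚ)))) ∧
    ((ram (rescale L ((ram L : ℚ) / ((sigma0 L : ℚ) - (ram L : ℚ)))) : ℤ)
        = sigma0 L - (ram L : ℤ) ∧
      ram (rescale L ((ram L : ℚ) / ((sigma0 L : ℚ) - (ram L : ℚ)))) < ram L) := by
  classical
  obtain ⟨hpos, hseg2, hstrict⟩ := hL
  set c := (ram L : ℚ) / ((sigma0 L : ℚ) - (ram L : ℚ)) with hcdef
  set f : ℚ → ℕ := fun x => (numer L x).natAbs with hfdef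
  have hmax : maxLevel L = L.max' hne := by
    rw [maxLevel, ← Finset.coe_max' hne]; rfl
  set k₀ := L.max' hne with hk₀def
  have hk₀L : k₀ ∈ L := L.max'_mem hne
  have hle : ∀ k ∈ L, k ≤ k₀ := fun k hk => L.le_max' k hk
  rw [hmax] at h1 h2
  have hden_dvd : ∀ k ∈ L, k.den ∣ ram L := fun k hk => Finset.dvd_lcm hk
  have hρ0 : ram L ≠ 0 := by
    intro h0
    rw [ram, Finset.lcm_eq_zero_iff] at h0
    obtain ⟨k, _, hk0⟩ := h0
    exact k.den_nz hk0
  have hρQ : (0:ℚ) < (ram L : ℚ) := by exact_mod_cast Nat.pos_of_ne_zero hρ0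
  have hint : ∀ k ∈ L, ((numer L k : ℤ) : ℚ) = k * (ram L : ℚ) := by
    intro k hk
    have hden1 : (k * (ram L : ℚ)).den = 1 := by
      rw [aux_mul_eq_int (hden_dvd k hk)]; exact Rat.den_intCast _
    exact (Rat.den_eq_one_iff _).mp hden1
  have hnum_pos : ∀ k ∈ L, 0 < numer L k := by
    intro k hk
    have : (0:ℚ) < k * (ram L : ℚ) := mul_pos (hpos k hk) hρQ
    exact Rat.num_pos.mpr this
  have hσ : sigma0 L = numer L k₀ := by rw [sigma0, hmax]
  have hσQ : ((sigma0 L : ℤ) : ℚ) = k₀ * (ram L : ℚ) := by rw [hσ]; exact hint k₀ hk₀L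
  have hρσ : (ram L : ℤ) < sigma0 L := by
    have hq : (ram L : ℚ) < ((sigma0 L : ℤ) : ℚ) := by rw [hσQ]; nlinarith
    exact_mod_cast hq
  have hσ2ρ : sigma0 L < 2 * (ram L : ℤ) := by
    have hq : ((sigma0 L : ℤ) : ℚ) < 2 * (ram L : ℚ) := by rw [hσQ]; nlinarith
    exact_mod_cast hq
  set nn : ℕ := (sigma0 L - (ram L : ℤ)).toNat with hnndef
  have hnnZ : (nn : ℤ) = sigma0 L - (ram L : ℤ) := Int.toNat_of_nonneg (by omega)
  have hnn0 : nn ≠ 0 := by omega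
  have hnnltρ : nn < ram L := by omega
  have hnnQ : (0:ℚ) < (nn : ℚ) := by exact_mod_cast Nat.pos_of_ne_zero hnn0
  have hceq : c = (ram L : ℚ) / (nn : ℚ) := by
    rw [hcdef]
    congr 1
    have : ((nn : ℤ) : ℚ) = ((sigma0 L : ℤ) : ℚ) - ((ram L : ℤ) : ℚ) := by
      exact_mod_cast congrArg (Int.cast : ℤ → ℚ) hnnZ
    push_cast at this ⊢
    linarith
  have hc_pos : 0 < c := by rw [hceq]; positivity
  have hck : ∀ k ∈ L, c * k = ((numer L k : ℤ) : ℚ) / (nn : ℚ) := by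
    intro k hk
    rw [hceq, div_mul_eq_mul_div, mul_comm (ram L : ℚ) k, ← hint k hk]
  have hcmul : ∀ k ∈ L, (c * k) * (nn : ℚ) = ((numer L k : ℤ) : ℚ) := by
    intro k hk
    rw [hck k hk, div_mul_cancel₀ _ (ne_of_gt hnnQ)]
  have hcdvd : ∀ k ∈ L, (c * k).den ∣ nn := fun k hk =>
    aux_den_dvd_of_mul_int hnn0 (hcmul k hk)
  have hcden_eq : ∀ k ∈ L, (c * k).den = nn / Nat.gcd (f k) nn := by
    intro k hk
    have h := aux_den_formula hnn0 (hcdvd k hk)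
    rw [hcmul k hk, Rat.num_intCast] at h
    exact h
  have hden_eq : ∀ k ∈ L, k.den = ram L / Nat.gcd (f k) (ram L) := by
    intro k hk
    exact aux_den_formula hρ0 (hden_dvd k hk)
  have hsegL : ∀ k ∈ L, segLcm L k
      = ram L / Nat.gcd (ram L) ((L.filter (fun x => k ≤ x)).gcd f) := by
    intro k hk
    rw [segLcm]
    exact aux_lcm_formula _ _ f (ram L) hρ0
      (fun a ha => hden_eq a (Finset.mem_filter.mp ha).1)
  have hramL : Nat.gcd (ram L) (L.gcd f) = 1 := by
    have h := aux_lcm_formula L Rat.den f (ram L) hρ0 hden_eq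
    rw [show L.lcm Rat.den = ram L from rfl] at h
    rcases Nat.div_eq_self.mp h.symm with h' | h'
    · exact absurd h' hρ0
    · exact h'
  have hfk₀ : f k₀ = nn + ram L := by
    have h1 : (f k₀ : ℤ) = sigma0 L := by
      rw [hσ, hfdef]
      exact Int.natAbs_of_nonneg (hnum_pos k₀ hk₀L).le
    omega
  have hGΓ : ∀ t : Finset ℚ, k₀ ∈ t →
      Nat.gcd nn (t.gcd f) = Nat.gcd (ram L) (t.gcd f) := by
    intro t ht
    have hd : t.gcd f ∣ f k₀ := Finset.gcd_dvd ht
    rw [hfk₀] at hd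
    apply Nat.dvd_antisymm
    · refine Nat.dvd_gcd ?_ (Nat.gcd_dvd_right _ _)
      have h3 := (Nat.gcd_dvd_right nn (t.gcd f)).trans hd
      have h4 := Nat.dvd_sub h3 (Nat.gcd_dvd_left nn (t.gcd f))
      simpa using h4
    · refine Nat.dvd_gcd ?_ (Nat.gcd_dvd_right _ _)
      have h3 := (Nat.gcd_dvd_right (ram L) (t.gcd f)).trans hd
      have h4 := Nat.dvd_sub h3 (Nat.gcd_dvd_left (ram L) (t.gcd f))
      simpa using h4
  have hint_dvd : ∀ a ∈ L, (c * a).den = 1 → nn ∣ f a := by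
    intro a ha hd1
    have h := hcden_eq a ha
    rw [hd1] at h
    have hg : Nat.gcd (f a) nn ∣ nn := Nat.gcd_dvd_right _ _
    have hnng : nn = Nat.gcd (f a) nn := by
      conv_lhs => rw [← Nat.div_mul_cancel hg, ← h, one_mul]
    exact hnng ▸ Nat.gcd_dvd_left _ _
  have hfilter : ∀ k : ℚ, ((rescale L c).filter (fun y => c * k ≤ y)) =
      (L.filter (fun k' => (c * k').den ≠ 1 ∧ k ≤ k')).image (fun k' => c * k') := by
    intro k
    ext y
    simp only [rescale, Finset.mem_filter, Finset.mem_image]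
    constructor
    · rintro ⟨⟨⟨k', hk', rfl⟩, hden⟩, hle'⟩
      exact ⟨k', ⟨hk', hden, (mul_le_mul_iff_right₀ hc_pos).mp hle'⟩, rfl⟩
    · rintro ⟨k', ⟨hk', hden, hkk⟩, rfl⟩
      exact ⟨⟨⟨k', hk', rfl⟩, hden⟩, (mul_le_mul_iff_right₀ hc_pos).mpr hkk⟩
  have hsegL' : ∀ k ∈ L, segLcm (rescale L c) (c * k)
      = nn / Nat.gcd (ram L) ((L.filter (fun x => k ≤ x)).gcd f) := by
    intro k hk
    rw [segLcm, hfilter k, Finset.lcm_image]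
    change (L.filter (fun k' => (c * k').den ≠ 1 ∧ k ≤ k')).lcm (fun k' => (c * k').den)
      = nn / Nat.gcd (ram L) ((L.filter (fun x => k ≤ x)).gcd f)
    rw [aux_lcm_formula _ _ f nn hnn0
      (fun a ha => hcden_eq a (Finset.mem_filter.mp ha).1)]
    rw [aux_gcd_filter_congr L f nn _ (fun x => k ≤ x)
      (fun a _ h => h.2)
      (fun a ha hq hp => hint_dvd a ha (by
        by_contra hden
        exact hp ⟨hden, hq⟩))]
    rw [hGΓ _ (Finset.mem_filter.mpr ⟨hk₀L, hle k hk⟩)]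
  have hramL' : ram (rescale L c) = nn := by
    have himg : rescale L c
        = (L.filter (fun k' => (c * k').den ≠ 1)).image (fun k' => c * k') := by
      ext y
      simp only [rescale, Finset.mem_filter, Finset.mem_image]
      constructor
      · rintro ⟨⟨k', hk', rfl⟩, hden⟩
        exact ⟨k', ⟨hk', hden⟩, rfl⟩
      · rintro ⟨k', ⟨hk', hden⟩, rfl⟩
        exact ⟨⟨k', hk', rfl⟩, hden⟩
    rw [ram, himg, Finset.lcm_image]
    change (L.filter (fun k' => (c * k').den ≠ 1)).lcm (fun k' => (c * k').den) = nn
    rw [aux_lcm_formula _ _ f nn hnn0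
      (fun a ha => hcden_eq a (Finset.mem_filter.mp ha).1)]
    rw [aux_gcd_filter_congr L f nn _ (fun _ => True)
      (fun a _ _ => trivial)
      (fun a ha _ hp => hint_dvd a ha (by simpa using hp))]
    rw [Finset.filter_true, hGΓ L hk₀L, hramL, Nat.div_one]
  -- part (a)
  have parta : ∀ k ∈ L, k ≠ k₀ → (c * k).den ≠ 1 := by
    intro k hk hne' hd1
    have hklt : k < k₀ := lt_of_le_of_ne (hle k hk) hne'
    have hnnfk : nn ∣ f k := hint_dvd k hk hd1
    have hTne : (L.filter (fun x => k < x)).Nonempty :=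
      ⟨k₀, Finset.mem_filter.mpr ⟨hk₀L, hklt⟩⟩
    set k'' := (L.filter (fun x => k < x)).min' hTne with hk''def
    have hk''T : k'' ∈ L.filter (fun x => k < x) := Finset.min'_mem _ hTne
    have hk''L : k'' ∈ L := (Finset.mem_filter.mp hk''T).1
    have hkk'' : k < k'' := (Finset.mem_filter.mp hk''T).2
    have hsplit : L.filter (fun x => k ≤ x)
        = insert k (L.filter (fun x => k'' ≤ x)) := by
      ext x
      simp only [Finset.mem_filter, Finset.mem_insert]
      constructor
      · rintro ⟨hxL, hkx⟩
        rcases eq_or_lt_of_le hkx with h | h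
        · exact Or.inl h.symm
        · exact Or.inr ⟨hxL, Finset.min'_le _ x (Finset.mem_filter.mpr ⟨hxL, h⟩)⟩
      · rintro (rfl | ⟨hxL, hx⟩)
        · exact ⟨hk, le_refl _⟩
        · exact ⟨hxL, le_of_lt (lt_of_lt_of_le hkk'' hx)⟩
    have hgcddvd : Nat.gcd (f k₀) (ram L) ∣ Nat.gcd (f k) (ram L) := by
      refine Nat.dvd_gcd ?_ (Nat.gcd_dvd_right _ _)
      have h3 : Nat.gcd (f k₀) (ram L) ∣ nn := by
        have h5 := Nat.dvd_sub (Nat.gcd_dvd_left (f k₀) (ram L))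
          (Nat.gcd_dvd_right (f k₀) (ram L))
        have h6 : f k₀ - ram L = nn := by omega
        rwa [h6] at h5
      exact h3.trans hnnfk
    have hdd : k.den ∣ k₀.den := by
      rw [hden_eq k hk, hden_eq k₀ hk₀L]
      exact aux_div_dvd_div hgcddvd (Nat.gcd_dvd_right _ _)
    have hd0seg : k₀.den ∣ segLcm L k'' :=
      Finset.dvd_lcm (Finset.mem_filter.mpr ⟨hk₀L, hle k'' hk''L⟩)
    have heq : segLcm L k = segLcm L k'' := by
      rw [segLcm, hsplit, Finset.lcm_insert]
      show Nat.lcm k.den (segLcm L k'') = segLcm L k''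
      exact Nat.dvd_antisymm (Nat.lcm_dvd (hdd.trans hd0seg) (Nat.dvd_refl _))
        (Nat.dvd_lcm_right _ _)
    have := hstrict k'' hk''L k hk hkk''
    omega
  -- divisibility/monotonicity of gamma
  have hΓdvd : ∀ k ∈ L, Nat.gcd (ram L) ((L.filter (fun x => k ≤ x)).gcd f) ∣ nn := by
    intro k hk
    rw [← hGΓ _ (Finset.mem_filter.mpr ⟨hk₀L, hle k hk⟩)]
    exact Nat.gcd_dvd_left _ _
  have hΓpos : ∀ k : ℚ, 0 < Nat.gcd (ram L) ((L.filter (fun x => k ≤ x)).gcd f) :=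
    fun k => Nat.gcd_pos_of_pos_left _ (Nat.pos_of_ne_zero hρ0)
  have hΓmono : ∀ k ∈ L, ∀ k' ∈ L, k' ≤ k →
      Nat.gcd (ram L) ((L.filter (fun x => k' ≤ x)).gcd f)
        ∣ Nat.gcd (ram L) ((L.filter (fun x => k ≤ x)).gcd f) := by
    intro k hk k' hk' hk'k
    refine Nat.dvd_gcd (Nat.gcd_dvd_left _ _) (Finset.dvd_gcd fun a ha => ?_)
    have haL := (Finset.mem_filter.mp ha).1
    have hka := (Finset.mem_filter.mp ha).2
    exact (Nat.gcd_dvd_right _ _).trans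
      (Finset.gcd_dvd (Finset.mem_filter.mpr ⟨haL, le_trans hk'k hka⟩))
  have hmem' : ∀ x, x ∈ rescale L c → ∃ k, k ∈ L ∧ (c * k).den ≠ 1 ∧ c * k = x := by
    intro x hx
    rw [rescale, Finset.mem_filter] at hx
    obtain ⟨hx1, hx2⟩ := hx
    obtain ⟨k, hkL, hkx⟩ := Finset.mem_image.mp hx1
    exact ⟨k, hkL, hkx ▸ hx2, hkx⟩
  refine ⟨?_, ⟨?_, ?_, ?_⟩, ?_, ?_⟩
  · intro k hk hkne
    rw [hmax] at hkne
    exact parta k hk hkne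
  · -- positivity
    intro x hx
    obtain ⟨k, hkL, _, rfl⟩ := hmem' x hx
    exact mul_pos hc_pos (hpos k hkL)
  · -- 2 ≤ segLcm
    intro x hx
    obtain ⟨k, hkL, hden, rfl⟩ := hmem' _ hx
    have hdvd : (c * k).den ∣ segLcm (rescale L c) (c * k) :=
      Finset.dvd_lcm (Finset.mem_filter.mpr ⟨hx, le_refl _⟩)
    have hpos' : 0 < segLcm (rescale L c) (c * k) := by
      rw [hsegL' k hkL]
      exact Nat.div_pos (Nat.le_of_dvd (Nat.pos_of_ne_zero hnn0) (hΓdvd k hkL))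
        (hΓpos k)
    have hden2 : 2 ≤ (c * k).den := by
      have := (c * k).pos
      omega
    exact le_trans hden2 (Nat.le_of_dvd hpos' hdvd)
  · -- strict monotonicity
    intro x hx x' hx' hlt
    obtain ⟨k, hkL, _, rfl⟩ := hmem' _ hx
    obtain ⟨k', hk'L, _, rfl⟩ := hmem' _ hx'
    have hk'k : k' < k := (mul_lt_mul_iff_right₀ hc_pos).mp hlt
    have hstr := hstrict k hkL k' hk'L hk'k
    rw [hsegL k hkL, hsegL k' hk'L] at hstr
    have hdvdΓ := hΓmono k hkL k' hk'L hk'k.le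
    have hneΓ : Nat.gcd (ram L) ((L.filter (fun x => k' ≤ x)).gcd f)
        ≠ Nat.gcd (ram L) ((L.filter (fun x => k ≤ x)).gcd f) := by
      intro hEq
      rw [hEq] at hstr
      exact lt_irrefl _ hstr
    rw [hsegL' k hkL, hsegL' k' hk'L]
    exact aux_div_lt hnn0 (hΓdvd k hkL) hdvdΓ hneΓ
  · rw [hramL']
    exact hnnZ
  · rw [hramL']
    exact hnnltρ
end

section
/- Let L be a nonempty level datum whose largest level k₀ satisfies 1 < k₀ < 2, let ρ := Ram(L) and σ := k₀·ρ ∈ ℤ, and let L′ := {(ρ/(σ−ρ))·k : k ∈ L} with its integer elements removed (so L′ is again a level datum). Then B_{L′} = B_L. -/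
open Finset

-- auxiliary gcd lemmas
lemma natgcd_absorb {r a b : ℕ} (h : r ∣ b) : Nat.gcd r (Nat.gcd b a) = Nat.gcd r a := by
  apply Nat.dvd_antisymm
  · exact Nat.dvd_gcd (Nat.gcd_dvd_left _ _)
      ((Nat.gcd_dvd_right _ _).trans (Nat.gcd_dvd_right b a))
  · exact Nat.dvd_gcd (Nat.gcd_dvd_left _ _)
      (Nat.dvd_gcd ((Nat.gcd_dvd_left _ _).trans h) (Nat.gcd_dvd_right _ _))

lemma natgcd_shift {r r' g : ℕ} (h : g ∣ r + r') : Nat.gcd r' g = Nat.gcd r g := by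
  apply Nat.dvd_antisymm <;> apply Nat.dvd_gcd
  · have h1 : Nat.gcd r' g ∣ r + r' := (Nat.gcd_dvd_right _ _).trans h
    have h2 := Nat.dvd_sub h1 (Nat.gcd_dvd_left r' g)
    simpa using h2
  · exact Nat.gcd_dvd_right _ _
  · have h1 : Nat.gcd r g ∣ r + r' := (Nat.gcd_dvd_right _ _).trans h
    have h2 := Nat.dvd_sub h1 (Nat.gcd_dvd_left r g)
    simpa using h2
  · exact Nat.gcd_dvd_right _ _

lemma gcd_filter_absorb {T : Finset ℚ} {P : ℚ → Prop} [DecidablePred P] {g : ℚ → ℕ} {r : ℕ}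
    (h : ∀ t ∈ T, ¬ P t → r ∣ g t) :
    Nat.gcd r ((T.filter P).gcd g) = Nat.gcd r (T.gcd g) := by
  apply Nat.dvd_antisymm
  · apply Nat.dvd_gcd (Nat.gcd_dvd_left _ _)
    apply Finset.dvd_gcd
    intro t ht
    by_cases hp : P t
    · exact (Nat.gcd_dvd_right _ _).trans (Finset.gcd_dvd (Finset.mem_filter.mpr ⟨ht, hp⟩))
    · exact (Nat.gcd_dvd_left _ _).trans (h t ht hp)
  · exact Nat.dvd_gcd (Nat.gcd_dvd_left _ _)
      ((Nat.gcd_dvd_right _ _).trans (Finset.gcd_mono (Finset.filter_subset _ _)))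


/-- if the largest level `k₀` of a nonempty level datum `L` satisfies
`1 < k₀ < 2`, with `ρ = Ram(L)`, `σ = k₀·ρ ∈ ℤ`, and `L'` is the rescaling of `L` by
`ρ/(σ−ρ)` with integer elements removed, then `B_{L'} = B_L`. -/
theorem stmt_8 (L : Finset ℚ) (hL : IsLevelDatum L) (hne : L.Nonempty)
    (h1 : 1 < maxLevel L) (h2 : maxLevel L < 2) :
    B (rescale L ((ram L : ℚ) / ((sigma0 L : ℚ) - (ram L : ℚ)))) = B L := by
  classical
  obtain ⟨hpos, -, -⟩ := hL
  set ρ : ℕ := ram L with hρdef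
  set k₀ : ℚ := maxLevel L with hk0def
  -- basic facts about the max
  obtain ⟨m, hm⟩ := Finset.max_of_nonempty hne
  have hk0m : k₀ = m := by rw [hk0def, maxLevel, hm]; rfl
  have hk0mem : k₀ ∈ L := by rw [hk0m]; exact Finset.mem_of_max hm
  have hk0le : ∀ k ∈ L, k ≤ k₀ := by
    intro k hk
    rw [hk0m]
    exact Finset.le_max_of_eq hk hm
  -- ρ > 0
  have hρpos : 0 < ρ := by
    rcases Nat.eq_zero_or_pos ρ with h | h
    · exfalso
      rw [hρdef, ram] at h
      rw [Finset.lcm_eq_zero_iff] at h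
      obtain ⟨k, -, hk⟩ := h
      exact k.den_nz hk
    · exact h
  have hρQ : (ρ : ℚ) ≠ 0 := by positivity
  -- numer facts
  have hnum : ∀ k ∈ L, ((numer L k : ℚ)) = k * ρ := by
    intro k hk
    have hden : (k.den : ℕ) ∣ ρ := Finset.dvd_lcm hk
    obtain ⟨m', hm'⟩ := hden
    have hdQ : (k.den : ℚ) ≠ 0 := by positivity
    have hk' : (k : ℚ) = (k.num : ℚ) / (k.den : ℚ) := (Rat.num_div_den k).symm
    have hint : (k : ℚ) * ρ = ((k.num * m' : ℤ) : ℚ) := by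
      conv_lhs => rw [hk', hm']
      push_cast
      field_simp
    rw [numer, hint, Rat.num_intCast]
  have hnumpos : ∀ k ∈ L, 0 < numer L k := by
    intro k hk
    have : (0 : ℚ) < (numer L k : ℚ) := by
      rw [hnum k hk]
      have := hpos k hk
      positivity
    exact_mod_cast this
  set s : ℚ → ℕ := fun k => (numer L k).natAbs with hsdef
  have hscast : ∀ k ∈ L, ((s k : ℤ)) = numer L k := by
    intro k hk
    exact Int.natAbs_of_nonneg (le_of_lt (hnumpos k hk))
  -- σ and ρ'
  set σ : ℕ := s k₀ with hσdef
  have hσcast : ((σ : ℚ)) = k₀ * ρ := by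
    rw [hσdef]
    rw [show ((s k₀ : ℚ)) = ((s k₀ : ℤ) : ℚ) by push_cast; ring, hscast k₀ hk0mem, hnum k₀ hk0mem]
  have hρσ : ρ < σ := by
    have : (ρ : ℚ) < σ := by
      have hρQpos : (0 : ℚ) < ρ := by positivity
      rw [hσcast]
      nlinarith [hρQpos]
    exact_mod_cast this
  have hσ2ρ : σ < 2 * ρ := by
    have : (σ : ℚ) < 2 * ρ := by
      have hρQpos : (0 : ℚ) < ρ := by positivity
      rw [hσcast]
      nlinarith [hρQpos]
    exact_mod_cast this
  set ρ' : ℕ := σ - ρ with hρ'def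
  have hσeq : σ = ρ + ρ' := by omega
  have hρ'pos : 0 < ρ' := by omega
  have hρ'Q : (ρ' : ℚ) ≠ 0 := by positivity
  -- the rescale constant
  have hsig0 : (sigma0 L : ℚ) - (ρ : ℚ) = (ρ' : ℚ) := by
    have : sigma0 L = ((σ : ℤ)) := by
      rw [sigma0, ← hk0def, ← hscast k₀ hk0mem, hσdef]
    rw [this]
    push_cast [hσeq]
    ring
  set c : ℚ := (ρ : ℚ) / ((sigma0 L : ℚ) - (ρ : ℚ)) with hcdef
  have hc : c = (ρ : ℚ) / (ρ' : ℚ) := by rw [hcdef, hsig0]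
  have hcpos : 0 < c := by
    rw [hc]
    positivity
  set φ : ℚ → ℚ := fun k => c * k with hφdef
  set L' : Finset ℚ := rescale L c with hL'def
  have hφval : ∀ k ∈ L, φ k = ((numer L k : ℚ)) / (ρ' : ℚ) := by
    intro k hk
    rw [hnum k hk, hφdef]
    simp only [hc]
    field_simp
  -- integrality of a rescaled element forces ρ' ∣ s k
  have hden1 : ∀ k ∈ L, (φ k).den = 1 → ρ' ∣ s k := by
    intro k hk h1'
    have hx := hφval k hk
    have hxi : ((φ k).num : ℚ) = φ k := Rat.coe_int_num_of_den_eq_one h1'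
    rw [← hxi] at hx
    have hz : (numer L k : ℚ) = ((φ k).num * (ρ' : ℤ) : ℤ) := by
      push_cast
      field_simp at hx
      linarith [hx]
    have hz' : numer L k = (φ k).num * (ρ' : ℤ) := by exact_mod_cast hz
    have hdv : (ρ' : ℤ) ∣ ((s k : ℤ)) := by
      rw [hscast k hk, hz']
      exact ⟨(φ k).num, by ring⟩
    exact_mod_cast hdv
  -- the numerators together with ρ are coprime
  have hcoprime : Nat.gcd ρ (L.gcd s) = 1 := by
    set g := Nat.gcd ρ (L.gcd s) with hg
    have hgρ : g ∣ ρ := Nat.gcd_dvd_left _ _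
    obtain ⟨b, hb⟩ := hgρ
    have hgpos : 0 < g := Nat.gcd_pos_of_pos_left _ hρpos
    have hdvd : ∀ k ∈ L, k.den ∣ b := by
      intro k hk
      have hgs : (g : ℤ) ∣ numer L k := by
        have hh : g ∣ s k := (Nat.gcd_dvd_right _ _).trans (Finset.gcd_dvd hk)
        rw [← hscast k hk]
        exact_mod_cast hh
      obtain ⟨a, ha⟩ := hgs
      have hgQ : (g : ℚ) ≠ 0 := by positivity
      have hkval : (k : ℚ) = (a : ℚ) / (b : ℚ) := by
        have h0 : (k : ℚ) = (numer L k : ℚ) / ρ := by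
          rw [hnum k hk]
          field_simp
        rw [h0, ha, hb]
        push_cast
        rcases Nat.eq_zero_or_pos b with hb0 | hb0
        · subst hb0
          simp at hb
          omega
        · have hbQ : (b : ℚ) ≠ 0 := by positivity
          field_simp
      have hdd := Rat.den_dvd a (b : ℤ)
      rw [Rat.divInt_eq_div] at hdd
      push_cast at hdd
      rw [← hkval] at hdd
      exact_mod_cast hdd
    have hρb : ρ ∣ b := Finset.lcm_dvd fun k hk => hdvd k hk
    have hbρ : b ∣ ρ := ⟨g, by rw [hb, Nat.mul_comm]⟩
    have hbeq : b = ρ := Nat.dvd_antisymm hbρ hρb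
    rw [hbeq] at hb
    have : g * ρ = 1 * ρ := by rw [one_mul, ← hb]
    exact Nat.eq_of_mul_eq_mul_right hρpos this
  -- description of L'
  have hL'eq : L' = (L.image φ).filter (fun x => x.den ≠ 1) := by rw [hL'def, rescale]
  have hmemL' : ∀ x ∈ L', ∃ k ∈ L, φ k = x := by
    intro x hx
    rw [hL'eq, Finset.mem_filter, Finset.mem_image] at hx
    obtain ⟨⟨k, hk, hkx⟩, -⟩ := hx
    exact ⟨k, hk, hkx⟩
  -- ram L' = ρ'
  have hD1 : ram L' ∣ ρ' := by
    apply Finset.lcm_dvd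
    intro x hx
    obtain ⟨k, hk, rfl⟩ := hmemL' x hx
    have hx' := hφval k hk
    have hdd := Rat.den_dvd (numer L k) (ρ' : ℤ)
    rw [Rat.divInt_eq_div] at hdd
    push_cast at hdd
    rw [← hx'] at hdd
    exact_mod_cast hdd
  have hcop' : Nat.gcd ρ' (L.gcd s) = 1 := by
    have hd1 : Nat.gcd ρ' (L.gcd s) ∣ ρ' := Nat.gcd_dvd_left _ _
    have hdσ : Nat.gcd ρ' (L.gcd s) ∣ σ := (Nat.gcd_dvd_right _ _).trans (Finset.gcd_dvd hk0mem)
    have hdρ : Nat.gcd ρ' (L.gcd s) ∣ ρ := by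
      have hdd := Nat.dvd_sub hdσ hd1
      have : σ - ρ' = ρ := by omega
      rwa [this] at hdd
    have hfin := Nat.dvd_gcd hdρ (Nat.gcd_dvd_right ρ' (L.gcd s))
    rw [hcoprime] at hfin
    exact Nat.dvd_one.mp hfin
  have hD2 : ρ' ∣ ram L' := by
    have h1' : ∀ k ∈ L, ρ' ∣ ram L' * s k := by
      intro k hk
      by_cases hd : (φ k).den = 1
      · exact Dvd.dvd.mul_left (hden1 k hk hd) _
      · have hxL' : φ k ∈ L' := by
          rw [hL'eq, Finset.mem_filter, Finset.mem_image]
          exact ⟨⟨k, hk, rfl⟩, hd⟩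
        have hdenD : ((φ k).den) ∣ ram L' := Finset.dvd_lcm hxL'
        have hcross : (φ k).num * (ρ' : ℤ) = numer L k * ((φ k).den : ℤ) := by
          have h0 : ((φ k).num : ℚ) / ((φ k).den : ℚ) = (numer L k : ℚ) / (ρ' : ℚ) := by
            rw [Rat.num_div_den, hφval k hk]
          have hdQ : ((φ k).den : ℚ) ≠ 0 := by positivity
          field_simp at h0
          rw [mul_comm (numer L k)]
          exact_mod_cast h0
        have hdvI : (ρ' : ℤ) ∣ (s k : ℤ) * ((φ k).den : ℤ) := by
          rw [hscast k hk]
          exact ⟨(φ k).num, by rw [← hcross]; ring⟩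
        have hnat : ρ' ∣ s k * (φ k).den := by exact_mod_cast hdvI
        have hfin : ρ' ∣ s k * ram L' := hnat.trans (mul_dvd_mul_left _ hdenD)
        simpa [Nat.mul_comm] using hfin
    have hgcd : ρ' ∣ L.gcd (fun k => ram L' * s k) := Finset.dvd_gcd h1'
    rw [Finset.gcd_mul_left, normalize_eq] at hgcd
    exact Nat.Coprime.dvd_of_dvd_mul_right hcop' hgcd
  have hram' : ram L' = ρ' := Nat.dvd_antisymm hD1 hD2
  -- numerators are preserved
  have hnum' : ∀ k ∈ L, numer L' (φ k) = numer L k := by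
    intro k hk
    rw [numer, hram', hφval k hk, div_mul_cancel₀ _ hρ'Q, Rat.num_intCast]
  -- monotonicity of φ
  have hφle : ∀ a b : ℚ, (φ a ≤ φ b ↔ a ≤ b) := fun a b => mul_le_mul_iff_right₀ hcpos
  have hφlt : ∀ a b : ℚ, (φ a < φ b ↔ a < b) := fun a b => mul_lt_mul_iff_right₀ hcpos
  -- segments of L'
  have hsegl : ∀ k : ℚ, L'.filter (fun x => φ k < x)
      = ((L.filter (fun x => k < x)).filter (fun a => (φ a).den ≠ 1)).image φ := by
    intro k
    rw [hL'eq]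
    ext x
    simp only [Finset.mem_filter, Finset.mem_image]
    constructor
    · rintro ⟨⟨⟨a, ha, rfl⟩, hden⟩, hlt⟩
      exact ⟨a, ⟨⟨ha, (hφlt k a).mp hlt⟩, hden⟩, rfl⟩
    · rintro ⟨a, ⟨⟨ha, hlt⟩, hden⟩, rfl⟩
      exact ⟨⟨⟨a, ha, rfl⟩, hden⟩, (hφlt k a).mpr hlt⟩
  have hsegle : ∀ k : ℚ, L'.filter (fun x => φ k ≤ x)
      = ((L.filter (fun x => k ≤ x)).filter (fun a => (φ a).den ≠ 1)).image φ := by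
    intro k
    rw [hL'eq]
    ext x
    simp only [Finset.mem_filter, Finset.mem_image]
    constructor
    · rintro ⟨⟨⟨a, ha, rfl⟩, hden⟩, hlt⟩
      exact ⟨a, ⟨⟨ha, (hφle k a).mp hlt⟩, hden⟩, rfl⟩
    · rintro ⟨a, ⟨⟨ha, hlt⟩, hden⟩, rfl⟩
      exact ⟨⟨⟨a, ha, rfl⟩, hden⟩, (hφle k a).mpr hlt⟩
  -- gSeg on segments of L'
  have hgcd_of_seg : ∀ T : Finset ℚ, T ⊆ L →
      gSeg L' ((T.filter (fun a => (φ a).den ≠ 1)).image φ) = Nat.gcd ρ' (T.gcd s) := by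
    intro T hT
    rw [gSeg, hram', Finset.gcd_image]
    have hcongr : (T.filter (fun a => (φ a).den ≠ 1)).gcd
          ((fun x => (numer L' x).natAbs) ∘ φ)
        = (T.filter (fun a => (φ a).den ≠ 1)).gcd s := by
      apply Finset.gcd_congr rfl
      intro a ha
      have haL : a ∈ L := hT (Finset.mem_of_mem_filter a ha)
      simp only [Function.comp, hsdef]
      rw [hnum' a haL]
    rw [hcongr]
    apply gcd_filter_absorb
    intro t ht hdt
    have htL : t ∈ L := hT ht
    exact hden1 t htL (not_not.mp hdt)
  have hgSegl : ∀ k : ℚ, gSeg L' (L'.filter (fun x => φ k < x))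
      = Nat.gcd ρ' ((L.filter (fun x => k < x)).gcd s) := by
    intro k
    rw [hsegl k]
    exact hgcd_of_seg _ (Finset.filter_subset _ _)
  have hgSegle : ∀ k : ℚ, gSeg L' (L'.filter (fun x => φ k ≤ x))
      = Nat.gcd ρ' ((L.filter (fun x => k ≤ x)).gcd s) := by
    intro k
    rw [hsegle k]
    exact hgcd_of_seg _ (Finset.filter_subset _ _)
  -- absorption when the rescaled level is integral
  have hins : ∀ k ∈ L, L.filter (fun x => k ≤ x) = insert k (L.filter (fun x => k < x)) := by
    intro k hk
    ext x
    simp only [Finset.mem_filter, Finset.mem_insert]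
    constructor
    · rintro ⟨hx, hle⟩
      rcases hle.lt_or_eq with h | h
      · exact Or.inr ⟨hx, h⟩
      · exact Or.inl h.symm
    · rintro (rfl | ⟨hx, hlt⟩)
      · exact ⟨hk, le_refl _⟩
      · exact ⟨hx, hlt.le⟩
  have habsorb : ∀ k ∈ L, ρ' ∣ s k →
      Nat.gcd ρ' ((L.filter (fun x => k ≤ x)).gcd s)
        = Nat.gcd ρ' ((L.filter (fun x => k < x)).gcd s) := by
    intro k hk hdvd
    rw [hins k hk, Finset.gcd_insert, gcd_eq_nat_gcd]
    exact natgcd_absorb hdvd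
  -- shift lemma : gcd with ρ' = gcd with ρ on segments containing k₀
  have hshift : ∀ T : Finset ℚ, k₀ ∈ T → Nat.gcd ρ' (T.gcd s) = Nat.gcd ρ (T.gcd s) := by
    intro T hT
    apply natgcd_shift
    have hdd : T.gcd s ∣ s k₀ := Finset.gcd_dvd hT
    rw [← hσdef, hσeq] at hdd
    exact hdd
  have hgSegL : ∀ T : Finset ℚ, gSeg L T = Nat.gcd ρ (T.gcd s) := fun T => rfl
  -- main sum identity
  have hsum1 : (∑ x ∈ L', ((gSeg L' (L'.filter (fun y => x < y)) : ℤ)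
        - (gSeg L' (L'.filter (fun y => x ≤ y)) : ℤ)) * numer L' x)
      = ∑ k ∈ L, ((Nat.gcd ρ' ((L.filter (fun x => k < x)).gcd s) : ℤ)
        - (Nat.gcd ρ' ((L.filter (fun x => k ≤ x)).gcd s) : ℤ)) * numer L k := by
    have hbij : (∑ k ∈ L.filter (fun a => (φ a).den ≠ 1),
          ((Nat.gcd ρ' ((L.filter (fun x => k < x)).gcd s) : ℤ)
          - (Nat.gcd ρ' ((L.filter (fun x => k ≤ x)).gcd s) : ℤ)) * numer L k)
        = ∑ x ∈ L', ((gSeg L' (L'.filter (fun y => x < y)) : ℤ)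
          - (gSeg L' (L'.filter (fun y => x ≤ y)) : ℤ)) * numer L' x := by
      apply Finset.sum_bij (fun a _ => φ a)
      · intro a ha
        rw [Finset.mem_filter] at ha
        rw [hL'eq, Finset.mem_filter, Finset.mem_image]
        exact ⟨⟨a, ha.1, rfl⟩, ha.2⟩
      · intro a _ b _ hab
        exact mul_left_cancel₀ (ne_of_gt hcpos) hab
      · intro x hx
        rw [hL'eq, Finset.mem_filter, Finset.mem_image] at hx
        obtain ⟨⟨a, ha, rfl⟩, hden⟩ := hx
        exact ⟨a, Finset.mem_filter.mpr ⟨ha, hden⟩, rfl⟩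
      · intro a ha
        rw [Finset.mem_filter] at ha
        rw [hgSegl a, hgSegle a, hnum' a ha.1]
    rw [← hbij]
    apply Finset.sum_subset (Finset.filter_subset _ _)
    intro k hk hknot
    have hden : (φ k).den = 1 := by
      by_contra hcon
      exact hknot (Finset.mem_filter.mpr ⟨hk, hcon⟩)
    rw [habsorb k hk (hden1 k hk hden)]
    ring
  -- comparing the two sums over L
  have hstep : (∑ k ∈ L, ((Nat.gcd ρ' ((L.filter (fun x => k < x)).gcd s) : ℤ)
        - (Nat.gcd ρ' ((L.filter (fun x => k ≤ x)).gcd s) : ℤ)) * numer L k)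
      = (∑ k ∈ L, ((gSeg L (L.filter (fun x => k < x)) : ℤ)
        - (gSeg L (L.filter (fun x => k ≤ x)) : ℤ)) * numer L k)
        + ((ρ' : ℤ) - (ρ : ℤ)) * numer L k₀ := by
    have hdiff : (∑ k ∈ L, (((Nat.gcd ρ' ((L.filter (fun x => k < x)).gcd s) : ℤ)
          - (Nat.gcd ρ' ((L.filter (fun x => k ≤ x)).gcd s) : ℤ)) * numer L k
          - ((gSeg L (L.filter (fun x => k < x)) : ℤ)
          - (gSeg L (L.filter (fun x => k ≤ x)) : ℤ)) * numer L k))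
        = ((ρ' : ℤ) - (ρ : ℤ)) * numer L k₀ := by
      rw [Finset.sum_eq_single_of_mem k₀ hk0mem]
      · have hflt : L.filter (fun x => k₀ < x) = ∅ :=
          Finset.filter_eq_empty_iff.mpr fun x hx => not_lt.mpr (hk0le _ hx)
        have hk0le' : k₀ ∈ L.filter (fun x => k₀ ≤ x) :=
          Finset.mem_filter.mpr ⟨hk0mem, le_refl _⟩
        rw [hgSegL, hgSegL, hshift _ hk0le', hflt, Finset.gcd_empty,
          Nat.gcd_zero_right, Nat.gcd_zero_right]
        ring
      · intro b hb hbne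
        have hblt : b < k₀ := lt_of_le_of_ne (hk0le b hb) hbne
        have h1' : k₀ ∈ L.filter (fun x => b < x) := Finset.mem_filter.mpr ⟨hk0mem, hblt⟩
        have h2' : k₀ ∈ L.filter (fun x => b ≤ x) := Finset.mem_filter.mpr ⟨hk0mem, hblt.le⟩
        rw [hgSegL, hgSegL, hshift _ h1', hshift _ h2']
        ring
    rw [Finset.sum_sub_distrib] at hdiff
    linarith [hdiff]
  -- conclusion
  have hBL' : B L' = (∑ k ∈ L, ((Nat.gcd ρ' ((L.filter (fun x => k < x)).gcd s) : ℤ)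
        - (Nat.gcd ρ' ((L.filter (fun x => k ≤ x)).gcd s) : ℤ)) * numer L k)
      - (ρ' : ℤ) ^ 2 + 1 := by
    rw [B, hram', hsum1]
  have hBL : B L = (∑ k ∈ L, ((gSeg L (L.filter (fun x => k < x)) : ℤ)
        - (gSeg L (L.filter (fun x => k ≤ x)) : ℤ)) * numer L k)
      - (ρ : ℤ) ^ 2 + 1 := rfl
  have hnk : numer L k₀ = (ρ : ℤ) + (ρ' : ℤ) := by
    rw [← hscast k₀ hk0mem]
    have hsk : s k₀ = ρ + ρ' := by rw [← hσdef]; exact hσeq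
    rw [hsk]
    push_cast
    ring
  rw [hBL', hstep, hBL, hnk]
  ring
end

section
/- Let L be a nonempty level datum whose largest level k₀ satisfies k₀ < 1, let ρ := Ram(L) and σ := k₀·ρ ∈ ℤ (so 0 < σ < ρ). Then: (a) for every element k of L other than the largest one, the rescaled rational (ρ/(ρ−σ))·k is not an integer; (b) the set L′ := {(ρ/(ρ−σ))·k : k ∈ L} with its integer elements removed (at most the rescaled largest level σ/(ρ−σ) can be an integer) is again a level datum; and (c) Ram(L′) = ρ − σ, which is strictly smaller than ρ = Ram(L). -/
open Finset

/-! ### Auxiliary lemmas -/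

lemma den_intCast_div (a : ℤ) (n : ℕ) (hn : n ≠ 0) :
    ((a : ℚ) / (n : ℚ)).den = n / Nat.gcd a.natAbs n := by
  rw [show ((n:ℕ):ℚ) = ((n:ℤ):ℚ) by push_cast; ring, ← Rat.divInt_eq_div, Rat.den_divInt, Int.gcd_comm]
  simp [hn, Int.gcd]

/-- `n/c ∣ n/d` when `d ∣ c ∣ n`. -/
lemma div_dvd_div_of_dvd {n c d : ℕ} (hn : 0 < n) (hc : c ∣ n) (hdc : d ∣ c) :
    n / c ∣ n / d := by
  have hd : d ∣ n := hdc.trans hc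
  rw [Nat.div_dvd_iff_dvd_mul hc (Nat.pos_of_dvd_of_pos hc hn)]
  obtain ⟨e, he⟩ := hdc
  have : c * (n / d) = e * n := by
    rw [he, mul_comm d e, mul_assoc, Nat.mul_div_cancel' hd]
  rw [this]
  exact dvd_mul_left n e

lemma lcm_div_div (n a b : ℕ) (hn : 0 < n) (ha : a ∣ n) (hb : b ∣ n) :
    Nat.lcm (n / a) (n / b) = n / Nat.gcd a b := by
  have ha0 : 0 < a := Nat.pos_of_dvd_of_pos ha hn
  have hd : Nat.gcd a b ∣ n := (Nat.gcd_dvd_left a b).trans ha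
  have hd0 : 0 < Nat.gcd a b := Nat.gcd_pos_of_pos_left _ ha0
  apply Nat.dvd_antisymm
  · exact Nat.lcm_dvd (div_dvd_div_of_dvd hn ha (Nat.gcd_dvd_left a b))
      (div_dvd_div_of_dvd hn hb (Nat.gcd_dvd_right a b))
  · rw [Nat.div_dvd_iff_dvd_mul hd hd0, ← Nat.gcd_mul_right]
    exact Nat.dvd_gcd
      (by calc n = a * (n / a) := (Nat.mul_div_cancel' ha).symm
            _ ∣ a * Nat.lcm (n / a) (n / b) :=
              Nat.mul_dvd_mul_left a (Nat.dvd_lcm_left _ _))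
      (by calc n = b * (n / b) := (Nat.mul_div_cancel' hb).symm
            _ ∣ b * Nat.lcm (n / a) (n / b) :=
              Nat.mul_dvd_mul_left b (Nat.dvd_lcm_right _ _))

/-- lcm of the denominators of a finset of rationals, each of the form `aₓ / n`. -/
lemma lcm_den_eq (n : ℕ) (hn : 0 < n) (f : ℚ → ℕ) (s : Finset ℚ)
    (h : ∀ x ∈ s, x.den = n / Nat.gcd (f x) n) :
    s.lcm Rat.den = n / Nat.gcd n (s.gcd f) := by
  induction s using Finset.induction with
  | empty => simp [Nat.div_self hn]
  | @insert a s ha ih =>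
    rw [Finset.lcm_insert, Finset.gcd_insert]
    rw [ih (fun x hx => h x (Finset.mem_insert_of_mem hx)),
      h a (Finset.mem_insert_self a s)]
    show Nat.lcm _ _ = _
    rw [lcm_div_div n _ _ hn (Nat.gcd_dvd_right _ _) (Nat.gcd_dvd_left _ _)]
    congr 1
    show Nat.gcd _ _ = Nat.gcd _ (Nat.gcd _ _)
    have lc : ∀ x y z : ℕ, Nat.gcd x (Nat.gcd y z) = Nat.gcd y (Nat.gcd x z) := by
      intro x y z; rw [← Nat.gcd_assoc, Nat.gcd_comm x y, Nat.gcd_assoc]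
    rw [Nat.gcd_assoc, ← Nat.gcd_assoc n n, Nat.gcd_self, lc]

/-- `gcd t N = gcd (σ + t) N` when `N ∣ σ`. -/
lemma gcd_shift1 (σ t N : ℕ) (h : N ∣ σ) : Nat.gcd t N = Nat.gcd (σ + t) N := by
  apply Nat.dvd_antisymm
  · exact Nat.dvd_gcd (Nat.dvd_add ((Nat.gcd_dvd_right t N).trans h) (Nat.gcd_dvd_left t N))
      (Nat.gcd_dvd_right t N)
  · refine Nat.dvd_gcd ?_ (Nat.gcd_dvd_right _ N)
    have h1 : Nat.gcd (σ + t) N ∣ σ := (Nat.gcd_dvd_right _ N).trans h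
    have := Nat.dvd_sub (Nat.gcd_dvd_left (σ + t) N) h1
    simpa using this

/-- `gcd t G = gcd (σ + t) (gcd σ G)` when `t ∣ σ`. -/
lemma gcd_shift2 (σ t G : ℕ) (h : t ∣ σ) :
    Nat.gcd t G = Nat.gcd (σ + t) (Nat.gcd σ G) := by
  apply Nat.dvd_antisymm
  · exact Nat.dvd_gcd (Nat.dvd_add ((Nat.gcd_dvd_left t G).trans h) (Nat.gcd_dvd_left t G))
      (Nat.dvd_gcd ((Nat.gcd_dvd_left t G).trans h) (Nat.gcd_dvd_right t G))
  · refine Nat.dvd_gcd ?_ ((Nat.gcd_dvd_right _ _).trans (Nat.gcd_dvd_right σ G))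
    have h1 : Nat.gcd (σ + t) (Nat.gcd σ G) ∣ σ :=
      (Nat.gcd_dvd_right _ _).trans (Nat.gcd_dvd_left σ G)
    have := Nat.dvd_sub (Nat.gcd_dvd_left (σ + t) _) h1
    simpa using this

/-- strict antitonicity of `t / ·` on divisors of `t`. -/
lemma div_lt_div_of_dvd_lt {t a b : ℕ} (ht : 0 < t) (ha : a ∣ t) (hb : b ∣ t) (hab : a < b) :
    t / b < t / a := by
  have ha0 : 0 < a := Nat.pos_of_dvd_of_pos ha ht
  refine lt_of_le_of_ne (Nat.div_le_div_left hab.le ha0) ?_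
  intro he
  have h1 : t / (t / b) = b := Nat.div_div_self hb ht.ne'
  have h2 : t / (t / a) = a := Nat.div_div_self ha ht.ne'
  rw [he, h2] at h1
  omega

/-- `2 ≤ t / a` for a proper divisor `a` of `t`. -/
lemma two_le_div {t a : ℕ} (ht : 0 < t) (ha : a ∣ t) (hlt : a < t) : 2 ≤ t / a := by
  have ha0 : 0 < a := Nat.pos_of_dvd_of_pos ha ht
  obtain ⟨m, hm⟩ := ha
  subst hm
  rw [Nat.mul_div_cancel_left _ ha0]
  nlinarith


/-- if the largest level `k₀` of a nonempty level datum `L` satisfies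
`k₀ < 1`, with `ρ = Ram(L)`, `σ = k₀·ρ ∈ ℤ` (so `0 < σ < ρ`), then (a) no level other
than the largest becomes an integer after rescaling by `ρ/(ρ−σ)`; (b) the rescaled set
with integer elements removed is again a level datum; (c) its ramification order is
`ρ − σ < ρ`. -/
theorem stmt_9 (L : Finset ℚ) (hL : IsLevelDatum L) (hne : L.Nonempty)
    (hmax : maxLevel L < 1) :
    (∀ k ∈ L, k ≠ maxLevel L →
      ((ram L : ℚ) / ((ram L : ℚ) - (sigma0 L : ℚ)) * k).den ≠ 1) ∧
    IsLevelDatum (rescale L ((ram L : ℚ) / ((ram L : ℚ) - (sigma0 L : ℚ)))) ∧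
    ((ram (rescale L ((ram L : ℚ) / ((ram L : ℚ) - (sigma0 L : ℚ)))) : ℤ)
        = (ram L : ℤ) - sigma0 L ∧
      ram (rescale L ((ram L : ℚ) / ((ram L : ℚ) - (sigma0 L : ℚ)))) < ram L) := by
  classical
  obtain ⟨hpos, hge2, hmono⟩ := hL
  -- the largest level
  set k₀ : ℚ := maxLevel L with hk₀def
  have hk0eq : k₀ = L.max' hne := by
    rw [hk₀def, maxLevel, ← Finset.coe_max' hne]; rfl
  have hk0mem : k₀ ∈ L := hk0eq ▸ L.max'_mem hne
  have hle : ∀ k ∈ L, k ≤ k₀ := fun k hk => hk0eq ▸ L.le_max' k hk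
  -- ρ
  set ρ : ℕ := ram L with hρdef
  have hρ0 : 0 < ρ := by
    rcases Nat.eq_zero_or_pos ρ with h | h
    · exfalso
      rw [hρdef, ram, Finset.lcm_eq_zero_iff] at h
      obtain ⟨x, _, hx0⟩ := h
      exact x.den_nz hx0
    · exact h
  have hρQ0 : ((ρ : ℕ) : ℚ) ≠ 0 := by positivity
  -- numerators
  have hcast : ∀ k ∈ L, ((numer L k : ℤ) : ℚ) = k * (ρ : ℚ) := by
    intro k hk
    obtain ⟨m, hm⟩ : k.den ∣ ρ := Finset.dvd_lcm hk
    have hden0 : (k.den : ℚ) ≠ 0 := Nat.cast_ne_zero.mpr k.den_nz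
    have h2 : k * (k.den : ℚ) = (k.num : ℚ) := Rat.mul_den_eq_num k
    have h1 : k * (ρ : ℚ) = ((k.num * m : ℤ) : ℚ) := by
      rw [hm]; push_cast; rw [← h2]; ring
    rw [show numer L k = (k * (ρ : ℚ)).num from rfl, h1, Rat.num_intCast]
  have hnum_pos : ∀ k ∈ L, 0 < numer L k := by
    intro k hk
    have h : (0 : ℚ) < k * (ρ : ℚ) := by
      have := hpos k hk
      positivity
    exact Rat.num_pos.mpr h
  set f : ℚ → ℕ := fun x => (numer L x).natAbs with hfdef
  have hfcast : ∀ k ∈ L, ((f k : ℕ) : ℤ) = numer L k := fun k hk =>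
    Int.natAbs_of_nonneg (hnum_pos k hk).le
  -- σ
  set σn : ℕ := (sigma0 L).natAbs with hσdef
  have hσf : f k₀ = σn := rfl
  have hσcast : ((σn : ℕ) : ℤ) = sigma0 L := hfcast k₀ hk0mem
  have hσQ : ((σn : ℕ) : ℚ) = k₀ * (ρ : ℚ) := by
    rw [show ((σn : ℕ) : ℚ) = (((σn : ℕ) : ℤ) : ℚ) by push_cast; ring, hσcast]
    exact hcast k₀ hk0mem
  have hσpos : 0 < σn := by
    have h := hnum_pos k₀ hk0mem
    have : sigma0 L = numer L k₀ := rfl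
    rw [hσdef, this]
    omega
  have hσlt : σn < ρ := by
    have h : k₀ * (ρ : ℚ) < (ρ : ℚ) := by
      have hρQ : (0 : ℚ) < (ρ : ℚ) := by positivity
      nlinarith
    rw [← hσQ] at h
    exact_mod_cast h
  -- t
  set t : ℕ := ρ - σn with htdef
  have hρσt : ρ = σn + t := by omega
  have ht0 : 0 < t := by omega
  have htQ0 : ((t : ℕ) : ℚ) ≠ 0 := by positivity
  have htQ : (ρ : ℚ) - ((sigma0 L : ℤ) : ℚ) = ((t : ℕ) : ℚ) := by
    rw [← hσcast]; push_cast [htdef, Nat.cast_sub hσlt.le]; ring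
  rw [htQ]
  set c : ℚ := (ρ : ℚ) / (t : ℚ) with hcdef
  have hcpos : 0 < c := by
    rw [hcdef]; positivity
  -- rescaled levels
  have hck : ∀ k ∈ L, c * k = ((numer L k : ℤ) : ℚ) / ((t : ℕ) : ℚ) := by
    intro k hk
    rw [hcast k hk, hcdef]
    field_simp
  have hden' : ∀ k ∈ L, (c * k).den = t / Nat.gcd (f k) t := by
    intro k hk
    rw [hck k hk]
    exact den_intCast_div _ t ht0.ne'
  have hint1 : ∀ k ∈ L, ((c * k).den = 1 ↔ t ∣ f k) := by
    intro k hk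
    rw [hck k hk, ← hfcast k hk,
      show (((f k : ℕ) : ℤ) : ℚ) / ((t : ℕ) : ℚ) = (((f k : ℕ) : ℤ) : ℚ) / (((t : ℕ) : ℤ) : ℚ)
        by push_cast; ring,
      Rat.den_div_intCast_eq_one_iff _ _ (by exact_mod_cast ht0.ne')]
    exact Int.natCast_dvd_natCast
  -- denominators within L
  have hdenL : ∀ x ∈ L, x.den = ρ / Nat.gcd (f x) ρ := by
    intro x hx
    have hx' : x = ((numer L x : ℤ) : ℚ) / (ρ : ℚ) := by
      rw [hcast x hx]; field_simp
    conv_lhs => rw [hx']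
    exact den_intCast_div _ ρ hρ0.ne'
  -- segments of L
  set N : ℚ → ℕ := fun k => (L.filter (fun x => k ≤ x)).gcd f with hNdef
  have hseg : ∀ k : ℚ, segLcm L k = ρ / Nat.gcd ρ (N k) := by
    intro k
    exact lcm_den_eq ρ hρ0 f _ (fun x hx => hdenL x (Finset.mem_filter.mp hx).1)
  set g : ℚ → ℕ := fun k => Nat.gcd ρ (N k) with hgdef
  have hgρ : ∀ k, g k ∣ ρ := fun k => Nat.gcd_dvd_left _ _
  have hNσ : ∀ k ∈ L, N k ∣ σn := by
    intro k hk
    have : k₀ ∈ L.filter (fun x => k ≤ x) := Finset.mem_filter.mpr ⟨hk0mem, hle k hk⟩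
    have h := Finset.gcd_dvd (f := f) this
    rwa [hσf] at h
  have hgt : ∀ k ∈ L, g k ∣ t := fun k hk =>
    Nat.dvd_sub (hgρ k) ((Nat.gcd_dvd_right ρ (N k)).trans (hNσ k hk))
  have hshift : ∀ k ∈ L, Nat.gcd t (N k) = g k := by
    intro k hk
    rw [hgdef, hρσt]
    exact gcd_shift1 σn t (N k) (hNσ k hk)
  -- gcd over all of L is 1
  have hfull : Nat.gcd ρ (L.gcd f) = 1 := by
    have h1 : ρ = ρ / Nat.gcd ρ (L.gcd f) := by
      conv_lhs => rw [hρdef, ram, lcm_den_eq ρ hρ0 f L hdenL]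
    have h2 : Nat.gcd ρ (L.gcd f) ∣ ρ := Nat.gcd_dvd_left _ _
    have h3 := Nat.div_mul_cancel h2
    rw [← h1] at h3
    have h4 : 0 < Nat.gcd ρ (L.gcd f) := Nat.gcd_pos_of_pos_left _ hρ0
    nlinarith
  -- part (a)
  have parta : ∀ k ∈ L, k ≠ k₀ → (c * k).den ≠ 1 := by
    intro k hk hkne hden1
    have hklt : k < k₀ := lt_of_le_of_ne (hle k hk) hkne
    have htf : t ∣ f k := (hint1 k hk).mp hden1
    set T : Finset ℚ := L.filter (fun x => k < x) with hTdef
    have hTne : T.Nonempty := ⟨k₀, Finset.mem_filter.mpr ⟨hk0mem, hklt⟩⟩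
    set km : ℚ := T.min' hTne with hkmdef
    have hkmT : km ∈ T := T.min'_mem hTne
    have hkmL : km ∈ L := (Finset.mem_filter.mp hkmT).1
    have hkkm : k < km := (Finset.mem_filter.mp hkmT).2
    have hTeq : L.filter (fun x => km ≤ x) = T := by
      ext x
      simp only [hTdef, Finset.mem_filter]
      constructor
      · rintro ⟨hxL, hx⟩; exact ⟨hxL, lt_of_lt_of_le hkkm hx⟩
      · rintro ⟨hxL, hx⟩; exact ⟨hxL, T.min'_le x (Finset.mem_filter.mpr ⟨hxL, hx⟩)⟩
    have hinsert : L.filter (fun x => k ≤ x) = insert k T := by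
      ext x
      simp only [hTdef, Finset.mem_filter, Finset.mem_insert]
      constructor
      · rintro ⟨hxL, hx⟩
        rcases eq_or_lt_of_le hx with h | h
        · exact Or.inl h.symm
        · exact Or.inr ⟨hxL, h⟩
      · rintro (rfl | ⟨hxL, hx⟩)
        · exact ⟨hk, le_refl _⟩
        · exact ⟨hxL, hx.le⟩
    have hkT : k ∉ T := by
      simp [hTdef, Finset.mem_filter]
    -- N k = gcd (f k) (T.gcd f)
    have hNk : N k = Nat.gcd (f k) (T.gcd f) := by
      rw [hNdef]
      show (L.filter (fun x => k ≤ x)).gcd f = _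
      rw [hinsert, Finset.gcd_insert]
      rfl
    have hNkm : N km = T.gcd f := by
      rw [hNdef]
      show (L.filter (fun x => km ≤ x)).gcd f = _
      rw [hTeq]
    -- gcds agree
    have hTσ : T.gcd f ∣ σn := by
      have : k₀ ∈ T := Finset.mem_filter.mpr ⟨hk0mem, hklt⟩
      have h := Finset.gcd_dvd (f := f) this
      rwa [hσf] at h
    have hgeq : Nat.gcd ρ (N k) = Nat.gcd ρ (N km) := by
      rw [hNk, hNkm]
      apply Nat.dvd_antisymm
      · exact Nat.dvd_gcd (Nat.gcd_dvd_left _ _)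
          ((Nat.gcd_dvd_right _ _).trans (Nat.gcd_dvd_right _ _))
      · refine Nat.dvd_gcd (Nat.gcd_dvd_left _ _) (Nat.dvd_gcd ?_ (Nat.gcd_dvd_right _ _))
        have hdd : Nat.gcd ρ (T.gcd f) ∣ t := Nat.dvd_sub (Nat.gcd_dvd_left _ _)
          ((Nat.gcd_dvd_right _ _).trans hTσ)
        exact hdd.trans htf
    have := hmono km hkmL k hk hkkm
    rw [hseg k, hseg km, hgeq] at this
    exact lt_irrefl _ this
  -- description of the rescaled set
  set M : Finset ℚ := if t ∣ σn then L.erase k₀ else L with hMdef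
  have hMsub : M ⊆ L := by
    rw [hMdef]; split
    · exact Finset.erase_subset _ _
    · exact Finset.Subset.refl L
  have hMmem : ∀ k ∈ L, k ≠ k₀ → k ∈ M := by
    intro k hk hkne
    rw [hMdef]; split
    · exact Finset.mem_erase.mpr ⟨hkne, hk⟩
    · exact hk
  have hM : rescale L c = M.image (fun k => c * k) := by
    ext x
    simp only [rescale, Finset.mem_filter, Finset.mem_image]
    constructor
    · rintro ⟨⟨k, hk, rfl⟩, hd⟩
      by_cases hke : k = k₀
      · subst hke
        have hcase : ¬ t ∣ σn := by
          intro hcase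
          exact hd ((hint1 k₀ hk).mpr (by rwa [hσf]))
        exact ⟨k₀, by rw [hMdef, if_neg hcase]; exact hk, rfl⟩
      · exact ⟨k, hMmem k hk hke, rfl⟩
    · rintro ⟨k, hkM, rfl⟩
      have hkL : k ∈ L := hMsub hkM
      refine ⟨⟨k, hkL, rfl⟩, ?_⟩
      by_cases hke : k = k₀
      · subst hke
        have hcase : ¬ t ∣ σn := by
          intro hcase
          rw [hMdef, if_pos hcase] at hkM
          exact (Finset.mem_erase.mp hkM).1 rfl
        rw [Ne, hint1 k₀ hkL, hσf]
        exact hcase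
      · exact parta k hkL hke
  -- numerators of the rescaled levels
  set f' : ℚ → ℕ := fun x => (x * ((t : ℕ) : ℚ)).num.natAbs with hf'def
  have hf' : ∀ k ∈ L, f' (c * k) = f k := by
    intro k hk
    have h : c * k * ((t : ℕ) : ℚ) = ((numer L k : ℤ) : ℚ) := by
      rw [hck k hk]; field_simp
    show ((c * k * ((t : ℕ) : ℚ)).num).natAbs = f k
    rw [h, Rat.num_intCast]
  have hdenf' : ∀ k ∈ L, (c * k).den = t / Nat.gcd (f' (c * k)) t := by
    intro k hk
    rw [hf' k hk]
    exact hden' k hk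
  -- filtering the image
  have hfilter : ∀ k : ℚ, (M.image (fun y => c * y)).filter (fun x => c * k ≤ x)
      = (M.filter (fun y => k ≤ y)).image (fun y => c * y) := by
    intro k
    ext x
    simp only [Finset.mem_filter, Finset.mem_image]
    constructor
    · rintro ⟨⟨y, hy, rfl⟩, hle'⟩
      exact ⟨y, ⟨hy, le_of_mul_le_mul_left hle' hcpos⟩, rfl⟩
    · rintro ⟨y, ⟨hy, hky⟩, rfl⟩
      exact ⟨⟨y, hy, rfl⟩, mul_le_mul_of_nonneg_left hky hcpos.le⟩
  -- lcm of denominators over an image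
  have hsegM : ∀ s : Finset ℚ, s ⊆ L → (s.image (fun y => c * y)).lcm Rat.den
      = t / Nat.gcd t (s.gcd f) := by
    intro s hs
    rw [lcm_den_eq t ht0 f' _ (fun x hx => by
        obtain ⟨y, hy, rfl⟩ := Finset.mem_image.mp hx
        exact hdenf' y (hs hy)),
      Finset.gcd_image, Finset.gcd_congr (f := f' ∘ fun y => c * y) rfl (fun y hy => hf' y (hs hy))]
  -- bridge between the gcds for L and for the rescaled set
  have hbridge : ∀ k ∈ L, Nat.gcd t ((M.filter (fun y => k ≤ y)).gcd f)
      = Nat.gcd ρ (N k) := by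
    intro k hk
    by_cases hcase : t ∣ σn
    · rw [hMdef, if_pos hcase]
      have hins : L.filter (fun x => k ≤ x)
          = insert k₀ ((L.erase k₀).filter (fun y => k ≤ y)) := by
        ext x
        simp only [Finset.mem_filter, Finset.mem_insert, Finset.mem_erase]
        constructor
        · rintro ⟨hxL, hkx⟩
          by_cases hxk : x = k₀
          · exact Or.inl hxk
          · exact Or.inr ⟨⟨hxk, hxL⟩, hkx⟩
        · rintro (rfl | ⟨⟨hxk, hxL⟩, hkx⟩)
          · exact ⟨hk0mem, hle k hk⟩
          · exact ⟨hxL, hkx⟩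
      have hNk : N k = Nat.gcd σn (((L.erase k₀).filter (fun y => k ≤ y)).gcd f) := by
        show (L.filter (fun x => k ≤ x)).gcd f = _
        rw [hins, Finset.gcd_insert, hσf]
        rfl
      rw [hNk, hρσt]
      exact gcd_shift2 σn t _ hcase
    · rw [hMdef, if_neg hcase, hρσt]
      exact gcd_shift1 σn t (N k) (hNσ k hk)
  -- segments of the rescaled datum
  have hsegL' : ∀ k ∈ M, segLcm (rescale L c) (c * k) = t / Nat.gcd ρ (N k) := by
    intro k hkM
    have hkL := hMsub hkM
    show ((rescale L c).filter (fun x => c * k ≤ x)).lcm Rat.den = _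
    rw [hM, hfilter k, hsegM _ ((Finset.filter_subset _ _).trans hMsub), hbridge k hkL]
  -- ramification of the rescaled datum
  have hramL' : ram (rescale L c) = t := by
    show (rescale L c).lcm Rat.den = t
    rw [hM, hsegM M hMsub]
    have h1 : Nat.gcd t (M.gcd f) = 1 := by
      by_cases hcase : t ∣ σn
      · have hLg : L.gcd f = Nat.gcd σn ((L.erase k₀).gcd f) := by
          conv_lhs => rw [← Finset.insert_erase hk0mem]
          rw [Finset.gcd_insert, hσf]
          rfl
        have h2 := gcd_shift2 σn t ((L.erase k₀).gcd f) hcase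
        rw [hMdef, if_pos hcase, h2, ← hρσt, ← hLg, hfull]
      · have hLσ : L.gcd f ∣ σn := by
          have h := Finset.gcd_dvd (f := f) hk0mem
          rwa [hσf] at h
        have h2 := gcd_shift1 σn t (L.gcd f) hLσ
        rw [hMdef, if_neg hcase, h2, ← hρσt, hfull]
    rw [h1, Nat.div_one]
  -- the proper-divisor property
  have hglt : ∀ k ∈ M, Nat.gcd ρ (N k) < t := by
    intro k hkM
    have hkL := hMsub hkM
    by_cases hcase : t ∣ σn
    · have hkne : k ≠ k₀ := by
        rw [hMdef, if_pos hcase] at hkM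
        exact (Finset.mem_erase.mp hkM).1
      have hklt : k < k₀ := lt_of_le_of_ne (hle k hkL) hkne
      have hmono' := hmono k₀ hk0mem k hkL hklt
      rw [hseg k, hseg k₀] at hmono'
      have hNk0 : N k₀ = σn := by
        have hsingle : L.filter (fun x => k₀ ≤ x) = {k₀} := by
          ext x
          simp only [Finset.mem_filter, Finset.mem_singleton]
          constructor
          · rintro ⟨hxL, hx⟩; exact le_antisymm (hle x hxL) hx
          · rintro rfl; exact ⟨hk0mem, le_refl _⟩
        show (L.filter (fun x => k₀ ≤ x)).gcd f = σn
        rw [hsingle, Finset.gcd_singleton, hσf]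
        simp
      have hgk0 : Nat.gcd ρ (N k₀) = t := by
        rw [hNk0]
        apply Nat.dvd_antisymm
        · exact Nat.dvd_sub (Nat.gcd_dvd_left _ _) (Nat.gcd_dvd_right _ _)
        · exact Nat.dvd_gcd (by rw [hρσt]; exact Nat.dvd_add hcase dvd_rfl) hcase
      rw [hgk0] at hmono'
      by_contra hge
      push_neg at hge
      exact absurd hmono' (not_lt.mpr (Nat.div_le_div_left hge ht0))
    · have h1 : Nat.gcd ρ (N k) ∣ σn := (Nat.gcd_dvd_right _ _).trans (hNσ k hkL)
      have h3 : Nat.gcd ρ (N k) ≠ t := fun h => hcase (h ▸ h1)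
      exact lt_of_le_of_ne (Nat.le_of_dvd ht0 (hgt k hkL)) h3
  refine ⟨parta, ⟨?_, ?_, ?_⟩, ?_, ?_⟩
  · -- positivity
    intro x hx
    rw [hM] at hx
    obtain ⟨k, hkM, rfl⟩ := Finset.mem_image.mp hx
    exact mul_pos hcpos (hpos k (hMsub hkM))
  · -- d ≥ 2
    intro x hx
    rw [hM] at hx
    obtain ⟨k, hkM, rfl⟩ := Finset.mem_image.mp hx
    rw [hsegL' k hkM]
    exact two_le_div ht0 (hgt k (hMsub hkM)) (hglt k hkM)
  · -- strict monotonicity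
    intro x hx x' hx' hlt'
    rw [hM] at hx hx'
    obtain ⟨a, haM, rfl⟩ := Finset.mem_image.mp hx
    obtain ⟨b, hbM, rfl⟩ := Finset.mem_image.mp hx'
    have haL := hMsub haM
    have hbL := hMsub hbM
    have hba : b < a := lt_of_mul_lt_mul_left hlt' hcpos.le
    have hmono' := hmono a haL b hbL hba
    rw [hseg a, hseg b] at hmono'
    have hgba : Nat.gcd ρ (N b) < Nat.gcd ρ (N a) := by
      by_contra hge
      push_neg at hge
      exact absurd hmono'
        (not_lt.mpr (Nat.div_le_div_left hge (Nat.gcd_pos_of_pos_left _ hρ0)))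
    rw [hsegL' a haM, hsegL' b hbM]
    exact div_lt_div_of_dvd_lt ht0 (hgt b hbL) (hgt a haL) hgba
  · -- value of the new ramification
    rw [hramL', ← hσcast, htdef]
    omega
  · -- the ramification drops
    rw [hramL']
    omega
end

section
/- Let L be a nonempty level datum whose largest level k₀ satisfies 1 < k₀ < 2, let ρ := Ram(L) and σ := k₀·ρ ∈ ℤ, and suppose σ − ρ does not divide σ. Then the largest level of the level datum S_∞(L) = {(ρ/(σ−ρ))·k : k ∈ L, (ρ/(σ−ρ))·k ∉ ℤ} equals σ/(σ−ρ) and is strictly greater than 2; in particular S_∞(L) is a fixed point of S_∞. -/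
open Finset

lemma maxLevel_eq_of {S : Finset ℚ} {a : ℚ} (ha : a ∈ S) (hub : ∀ x ∈ S, x ≤ a) :
    maxLevel S = a := by
  have hne : S.Nonempty := ⟨a, ha⟩
  have h : S.max' hne = a :=
    le_antisymm (Finset.max'_le _ _ _ hub) (Finset.le_max' _ _ ha)
  rw [maxLevel, ← Finset.coe_max' hne, h, WithBot.unbotD_coe]

/-- if the largest level `k₀` of a nonempty level datum `L` satisfies
`1 < k₀ < 2`, with `ρ = Ram(L)`, `σ = k₀·ρ ∈ ℤ`, and `σ − ρ` does not divide `σ`, then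
the largest level of `S_∞(L)` equals `σ/(σ−ρ) > 2`; in particular `S_∞(L)` is a fixed
point of `S_∞`. -/
theorem stmt_10 (L : Finset ℚ) (hL : IsLevelDatum L) (hne : L.Nonempty)
    (h1 : 1 < maxLevel L) (h2 : maxLevel L < 2)
    (hdvd : ¬ (sigma0 L - (ram L : ℤ)) ∣ sigma0 L) :
    maxLevel (Sinf L) = (sigma0 L : ℚ) / ((sigma0 L : ℚ) - (ram L : ℚ)) ∧
    2 < maxLevel (Sinf L) ∧
    Sinf (Sinf L) = Sinf L := by
  set k₀ := L.max' hne with hk0def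
  have hkL : maxLevel L = k₀ := by
    rw [maxLevel, ← Finset.coe_max' hne, WithBot.unbotD_coe]
  have hk0mem : k₀ ∈ L := Finset.max'_mem _ _
  have h1' : 1 < k₀ := hkL ▸ h1
  have h2' : k₀ < 2 := hkL ▸ h2
  -- ρ > 0
  have hρne : ram L ≠ 0 := by
    rw [ram]
    intro h
    rw [Finset.lcm_eq_zero_iff] at h
    obtain ⟨x, -, hx⟩ := h
    exact x.den_nz hx
  have hρpos : (0 : ℚ) < (ram L : ℚ) := by positivity
  -- σ = k₀ ρ
  obtain ⟨m, hm⟩ : (k₀.den : ℕ) ∣ ram L := Finset.dvd_lcm hk0mem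
  have hint : k₀ * ((ram L : ℕ) : ℚ) = ((k₀.num * m : ℤ) : ℚ) := by
    rw [hm]
    push_cast
    rw [← mul_assoc, Rat.mul_den_eq_num]
  have hσ : ((sigma0 L : ℤ) : ℚ) = k₀ * (ram L : ℚ) := by
    rw [sigma0, numer, hkL, hint, Rat.num_intCast]
  have hσρ : (0 : ℚ) < (sigma0 L : ℚ) - (ram L : ℚ) := by
    rw [hσ]; nlinarith
  set c : ℚ := (ram L : ℚ) / ((sigma0 L : ℚ) - (ram L : ℚ)) with hcdef
  have hcpos : 0 < c := div_pos hρpos hσρ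
  have hck₀ : c * k₀ = (sigma0 L : ℚ) / ((sigma0 L : ℚ) - (ram L : ℚ)) := by
    rw [hcdef, hσ]
    field_simp
  have hnotint : (c * k₀).den ≠ 1 := by
    intro h
    apply hdvd
    refine ⟨(c * k₀).num, ?_⟩
    have h2 : ((c * k₀).num : ℚ) = c * k₀ := (Rat.den_eq_one_iff _).mp h
    have h3 : ((sigma0 L : ℤ) : ℚ) = (((sigma0 L : ℤ) : ℚ) - (ram L : ℚ)) * (c * k₀).num := by
      rw [h2, hck₀]
      field_simp
    exact_mod_cast h3
  have hS : Sinf L = rescale L c := by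
    rw [Sinf, if_pos ⟨h1, h2⟩]
  have hmem : c * k₀ ∈ rescale L c := by
    rw [rescale, Finset.mem_filter, Finset.mem_image]
    exact ⟨⟨k₀, hk0mem, rfl⟩, hnotint⟩
  have hub : ∀ x ∈ rescale L c, x ≤ c * k₀ := by
    intro x hx
    rw [rescale, Finset.mem_filter, Finset.mem_image] at hx
    obtain ⟨⟨k, hk, rfl⟩, -⟩ := hx
    exact mul_le_mul_of_nonneg_left (Finset.le_max' _ _ hk) hcpos.le
  have hmaxS : maxLevel (Sinf L) = (sigma0 L : ℚ) / ((sigma0 L : ℚ) - (ram L : ℚ)) := by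
    rw [hS, maxLevel_eq_of hmem hub, hck₀]
  have h2S : 2 < maxLevel (Sinf L) := by
    rw [hmaxS, lt_div_iff₀ hσρ, hσ]
    nlinarith
  refine ⟨hmaxS, h2S, ?_⟩
  rw [Sinf, if_neg]
  rintro ⟨-, hlt⟩
  linarith
end
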